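/- arXiv:2005.02871 — 12 statements merged into one kernel-verified Lean document; each statement's English description precedes it below -/
import Mathlib

section
/- Let N ≥ 1, let A and X be N×N complex matrices, and let θ be a real number. Then e^(−θ/2) · ∫₀¹ e^(θs) · exp(s·A) · (X·A − A·X − θ·X) · exp((1−s)·A) ds = e^(−θ/2) · X · exp(A) − e^(θ/2) · exp(A) · X, where exp denotes the matrix exponential and the integral is the Bochner integral of a matrix-valued function on [0,1]. -/
open scoped Matrix.Norms.L2Operator

open NormedSpace -- for `exp`

set_option maxRecDepth 4000 in
/-- For N×N complex matrices `A`, `X` and a real number `θ`,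
`e^(−θ/2) ∫₀¹ e^(θs) exp(sA) (XA − AX − θX) exp((1−s)A) ds
  = e^(−θ/2) X exp(A) − e^(θ/2) exp(A) X`. -/
theorem integral_exp_commutator_eq (N : ℕ) (hN : 1 ≤ N)
    (A X : Matrix (Fin N) (Fin N) ℂ) (θ : ℝ) :
    Real.exp (-θ/2) •
      (∫ s in (0:ℝ)..1, Real.exp (θ * s) •
        (exp (s • A) * (X * A - A * X - (θ : ℂ) • X) * exp ((1 - s) • A)))
    = Real.exp (-θ/2) • (X * exp A) - Real.exp (θ/2) • (exp A * X) := by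
  set F : ℝ → Matrix (Fin N) (Fin N) ℂ :=
    fun s => Real.exp (θ * s) • (exp (s • A) * X * exp ((1 - s) • A)) with hFdef
  have hE : ∀ s : ℝ, HasDerivAt (fun t : ℝ => exp (t • A)) (exp (s • A) * A) s := by
    intro s
    have h := HasDerivAt.scomp (𝕜 := ℝ) s (hasDerivAt_exp_smul_const (𝕂 := ℂ) A (s : ℂ))
      Complex.ofRealCLM.hasDerivAt
    simpa [Function.comp_def, Complex.coe_smul] using h
  have hG : ∀ s : ℝ, HasDerivAt (fun t : ℝ => exp ((1 - t) • A))
      (-(A * exp ((1 - s) • A))) s := by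
    intro s
    have hin : HasDerivAt (fun t : ℝ => ((1 : ℂ) - t)) (-1 : ℂ) s := by
      simpa using (Complex.ofRealCLM.hasDerivAt (x := s)).const_sub 1
    have h := HasDerivAt.scomp (𝕜 := ℝ) s
      (hasDerivAt_exp_smul_const' (𝕂 := ℂ) A ((1 : ℂ) - s)) hin
    have e1 : ∀ t : ℝ, ((1 : ℂ) - (t : ℂ)) • A = (1 - t) • A := by
      intro t
      rw [← Complex.coe_smul]
      push_cast
      ring_nf
    simp only [Function.comp_def, e1, neg_one_smul, neg_mul] at h
    simpa using h
  have hF : ∀ s : ℝ, HasDerivAt (fun t => -F t)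
      (Real.exp (θ * s) •
        (exp (s • A) * (X * A - A * X - (θ : ℂ) • X) * exp ((1 - s) • A))) s := by
    intro s
    have hc : HasDerivAt (fun t : ℝ => Real.exp (θ * t)) (Real.exp (θ * s) * θ) s := by
      simpa [mul_comm] using ((hasDerivAt_id s).const_mul θ).exp
    have hm := ((hE s).mul_const X).mul (hG s)
    have h := (hc.smul hm).neg
    convert h using 1
    case e'_4 => rfl
    case e'_5 => rfl
    case e'_6 => rfl
    case e'_8 => rfl
    rw [Complex.coe_smul θ X]
    simp only [mul_sub, sub_mul, mul_add, add_mul, smul_sub, smul_add, mul_neg, neg_mul,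
      mul_smul_comm, smul_mul_assoc, mul_assoc, neg_add, neg_neg, smul_neg, mul_comm, Pi.mul_apply]
    module
  have hcont : Continuous fun s : ℝ => Real.exp (θ * s) •
      (exp (s • A) * (X * A - A * X - (θ : ℂ) • X) * exp ((1 - s) • A)) := by
    apply Continuous.fun_smul
    · exact Real.continuous_exp.comp (continuous_const.mul continuous_id)
    · exact (((continuous_iff_continuousAt.2 fun x => (exp_analytic (𝕂 := ℂ) x).continuousAt).comp (continuous_id.smul continuous_const)).mul
        continuous_const).mul
        ((continuous_iff_continuousAt.2 fun x => (exp_analytic (𝕂 := ℂ) x).continuousAt).comp ((continuous_const.sub continuous_id).smul continuous_const))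
  have hint := intervalIntegral.integral_eq_sub_of_hasDerivAt (a := 0) (b := 1)
    (fun s _ => hF s) (hcont.intervalIntegrable 0 1)
  rw [hint]
  have hF0 : F 0 = X * exp A := by
    simp [hFdef, exp_zero]
  have hF1 : F 1 = Real.exp θ • (exp A * X) := by
    simp [hFdef, exp_zero]
  rw [show -F 1 - -F 0 = F 0 - F 1 by abel, hF0, hF1, smul_sub, smul_smul,
    ← Real.exp_add]
  rw [show -θ/2 + θ = θ/2 by ring]
end

section
/- Let N ≥ 1, let p : Fin N → ℝ with pₙ > 0 for all n, let ρ be the diagonal N×N complex matrix with diagonal entries pₙ, let θ ∈ ℝ, and let X be any N×N complex matrix. Define the tilted operator [ρ]_θ(X) := e^(−θ/2) · ∫₀¹ e^(sθ) · D(s) · X · D(1−s) ds, where D(s) is the diagonal matrix with entries pₙ^s. Then for every pair of indices n, m, the (n,m) entry of [ρ]_θ(X) equals Φ(e^(θ/2)·pₙ, e^(−θ/2)·pₘ) · Xₙₘ, where Φ is the logarithmic mean. -/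
open scoped Matrix.Norms.L2Operator

/-- The logarithmic mean of two positive real numbers. -/
noncomputable def logMean (x y : ℝ) : ℝ :=
  if x = y then x else (x - y) / (Real.log x - Real.log y)

lemma scalar_int (a b : ℝ) (ha : 0 < a) (hb : 0 < b) :
    ∫ s in (0:ℝ)..1, a ^ s * b ^ (1 - s) = logMean a b := by
  have key : ∀ s : ℝ, a ^ s * b ^ (1 - s) = b * Real.exp (s * (Real.log a - Real.log b)) := by
    intro s
    rw [Real.rpow_def_of_pos ha, Real.rpow_def_of_pos hb, ← Real.exp_add]
    nth_rewrite 2 [← Real.exp_log hb]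
    rw [← Real.exp_add]
    ring_nf
  simp_rw [key]
  rw [intervalIntegral.integral_const_mul]
  unfold logMean
  by_cases h : a = b
  · simp [h]
  · have hL : Real.log a - Real.log b ≠ 0 := by
      intro hc
      exact h (Real.log_injOn_pos (Set.mem_Ioi.2 ha) (Set.mem_Ioi.2 hb) (by linarith))
    rw [if_neg h]
    rw [intervalIntegral.integral_comp_mul_right _ hL, integral_exp]
    rw [smul_eq_mul, one_mul, zero_mul, Real.exp_zero, Real.exp_sub, Real.exp_log ha,
      Real.exp_log hb]
    field_simp

/-- For a diagonal density matrix `ρ = diag(p)` with positive entries, the `(n,m)` entry of the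
tilted operator `[ρ]_θ(X) = e^(−θ/2) ∫₀¹ e^(sθ) D(s) X D(1−s) ds` (where `D(s) = diag(pₖ^s)`)
equals `Φ(e^(θ/2)·pₙ, e^(−θ/2)·pₘ) · Xₙₘ`. -/
theorem tilted_diagonal_entry (N : ℕ) (hN : 1 ≤ N) (p : Fin N → ℝ) (hp : ∀ n, 0 < p n)
    (θ : ℝ) (X : Matrix (Fin N) (Fin N) ℂ) (n m : Fin N) :
    (Real.exp (-θ/2) •
      ∫ s in (0:ℝ)..1, Real.exp (s * θ) •
        (Matrix.diagonal (fun k => ((p k ^ s : ℝ) : ℂ)) * X *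
          Matrix.diagonal (fun k => ((p k ^ (1 - s) : ℝ) : ℂ)))) n m
    = (logMean (Real.exp (θ/2) * p n) (Real.exp (-θ/2) * p m) : ℂ) * X n m := by
  set f : ℝ → Matrix (Fin N) (Fin N) ℂ := fun s => Real.exp (s * θ) •
        (Matrix.diagonal (fun k => ((p k ^ s : ℝ) : ℂ)) * X *
          Matrix.diagonal (fun k => ((p k ^ (1 - s) : ℝ) : ℂ))) with hfdef
  have hcont : Continuous f := by
    have h1 : Continuous (fun s : ℝ => Matrix.diagonal (fun k => ((p k ^ s : ℝ) : ℂ))) :=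
      Continuous.matrix_diagonal (continuous_pi fun k =>
        Complex.continuous_ofReal.comp
          (Continuous.rpow continuous_const continuous_id fun _ => Or.inl (hp k).ne'))
    have h2 : Continuous (fun s : ℝ => Matrix.diagonal (fun k => ((p k ^ (1 - s) : ℝ) : ℂ))) :=
      Continuous.matrix_diagonal (continuous_pi fun k =>
        Complex.continuous_ofReal.comp
          (Continuous.rpow continuous_const (continuous_const.sub continuous_id)
            fun _ => Or.inl (hp k).ne'))
    exact ((Real.continuous_exp.comp (continuous_id.mul continuous_const)).smul
      ((h1.matrix_mul continuous_const).matrix_mul h2))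
  have hInt : IntervalIntegrable f MeasureTheory.volume 0 1 := hcont.intervalIntegrable 0 1
  have hL : Continuous (fun A : Matrix (Fin N) (Fin N) ℂ => A n m) :=
    (continuous_apply m).comp (continuous_apply n)
  set L : Matrix (Fin N) (Fin N) ℂ →L[ℝ] ℂ :=
    ⟨{ toFun := fun A => A n m, map_add' := fun _ _ => rfl,
       map_smul' := fun _ _ => rfl }, hL⟩ with hLdef
  have hentry : (∫ s in (0:ℝ)..1, f s) n m = ∫ s in (0:ℝ)..1, (f s) n m := by
    exact (L.intervalIntegral_comp_comm hInt).symm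
  rw [Matrix.smul_apply, hentry]
  have hfs : ∀ s : ℝ, (f s) n m
      = ((Real.exp (s * θ) * (p n ^ s * p m ^ (1 - s)) : ℝ) : ℂ) * X n m := by
    intro s
    rw [hfdef]
    simp only [Matrix.smul_apply, Matrix.mul_diagonal, Matrix.diagonal_mul,
      Complex.real_smul]
    push_cast
    ring
  simp_rw [hfs]
  rw [intervalIntegral.integral_mul_const, intervalIntegral.integral_ofReal]
  rw [Complex.real_smul, ← mul_assoc, ← Complex.ofReal_mul]
  congr 2
  rw [← intervalIntegral.integral_const_mul]
  rw [← scalar_int (Real.exp (θ/2) * p n) (Real.exp (-θ/2) * p m)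
    (mul_pos (Real.exp_pos _) (hp n)) (mul_pos (Real.exp_pos _) (hp m))]
  apply intervalIntegral.integral_congr
  intro s _
  simp only []
  rw [Real.mul_rpow (Real.exp_pos _).le (hp n).le,
      Real.mul_rpow (Real.exp_pos _).le (hp m).le,
      Real.rpow_def_of_pos (Real.exp_pos _), Real.log_exp,
      Real.rpow_def_of_pos (Real.exp_pos _), Real.log_exp]
  have key : Real.exp (-θ/2) * Real.exp (s*θ) = Real.exp (θ/2*s) * Real.exp (-θ/2*(1-s)) := by
    rw [← Real.exp_add, ← Real.exp_add]; ring_nf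
  linear_combination (p n ^ s * p m ^ (1 - s)) * key
end

section
/- Let N ≥ 1, let A be a Hermitian N×N complex matrix, set ρ = exp(A), let θ ∈ ℝ, and let X, ξ, ν be arbitrary N×N complex matrices. Then Tr(ξ† · [X, [ρ]_θ([X†, ν])]) is the complex conjugate of Tr(ν† · [X, [ρ]_θ([X†, ξ])]), where [·,·] denotes the matrix commutator. -/
open scoped Matrix.Norms.L2Operator

open Matrix

/-- The tilted operator `[ρ]_θ(X)` for `ρ = exp(A)`:
`[ρ]_θ(X) = e^(−θ/2) ∫₀¹ e^(sθ) exp(sA) X exp((1−s)A) ds`. -/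
noncomputable def tilted {N : ℕ} (A : Matrix (Fin N) (Fin N) ℂ) (θ : ℝ)
    (X : Matrix (Fin N) (Fin N) ℂ) : Matrix (Fin N) (Fin N) ℂ :=
  Real.exp (-θ/2) • ∫ s in (0:ℝ)..1, Real.exp (s * θ) •
    (NormedSpace.exp (s • A) * X * NormedSpace.exp ((1 - s) • A))

/-- The continuous linear map `M ↦ trace (B * M)`. -/
noncomputable def trMulCLM {N : ℕ} (B : Matrix (Fin N) (Fin N) ℂ) :
    Matrix (Fin N) (Fin N) ℂ →L[ℂ] ℂ :=
  LinearMap.toContinuousLinearMap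
    ((Matrix.traceLinearMap (Fin N) ℂ ℂ).comp (LinearMap.mulLeft ℂ B))

lemma trMulCLM_apply {N : ℕ} (B M : Matrix (Fin N) (Fin N) ℂ) :
    trMulCLM B M = Matrix.trace (B * M) := rfl

lemma tilted_integrand_continuous {N : ℕ} (A C : Matrix (Fin N) (Fin N) ℂ) (θ : ℝ) :
    Continuous fun s : ℝ => Real.exp (s * θ) •
      (NormedSpace.exp (s • A) * C * NormedSpace.exp ((1 - s) • A)) := by
  let +nondep : NormedAlgebra ℚ (Matrix (Fin N) (Fin N) ℂ) := .restrictScalars ℚ ℂ _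
  apply Continuous.fun_smul
  · exact Real.continuous_exp.comp (continuous_id.mul continuous_const)
  · exact ((NormedSpace.exp_continuous.comp (continuous_id.smul continuous_const)).mul
      continuous_const).mul
      (NormedSpace.exp_continuous.comp ((continuous_const.sub continuous_id).smul
        continuous_const))

lemma trace_mul_tilted {N : ℕ} (A : Matrix (Fin N) (Fin N) ℂ) (hA : A.IsHermitian) (θ : ℝ)
    (B C : Matrix (Fin N) (Fin N) ℂ) :
    Matrix.trace (B * tilted A θ C)
      = starRingEnd ℂ (Matrix.trace (Cᴴ * tilted A θ Bᴴ)) := by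
  have key : ∀ (B C : Matrix (Fin N) (Fin N) ℂ),
      Matrix.trace (B * tilted A θ C)
        = Real.exp (-θ/2) • ∫ s in (0:ℝ)..1, Real.exp (s * θ) •
            Matrix.trace (B * (NormedSpace.exp (s • A) * C
              * NormedSpace.exp ((1 - s) • A))) := by
    intro B C
    rw [tilted, Matrix.mul_smul, Matrix.trace_smul, ← trMulCLM_apply,
      ← ContinuousLinearMap.intervalIntegral_comp_comm _
        ((tilted_integrand_continuous A C θ).intervalIntegrable 0 1)]
    simp only [← Complex.coe_smul, _root_.map_smul, trMulCLM_apply, mul_smul_comm,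
      Matrix.trace_smul]
  rw [key, key]
  -- pull the conjugation inside the integral
  rw [intervalIntegral.integral_of_le (by norm_num : (0:ℝ) ≤ 1),
      intervalIntegral.integral_of_le (by norm_num : (0:ℝ) ≤ 1)]
  rw [Complex.real_smul, Complex.real_smul, _root_.map_mul, Complex.conj_ofReal,
    ← integral_conj]
  congr 1
  apply MeasureTheory.integral_congr_ae
  filter_upwards with s
  rw [Complex.real_smul, Complex.real_smul, _root_.map_mul, Complex.conj_ofReal]
  congr 1
  symm
  have hexp : ∀ t : ℝ, (NormedSpace.exp (t • A))ᴴ = NormedSpace.exp (t • A) := by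
    intro t
    rw [← Matrix.star_eq_conjTranspose, NormedSpace.star_exp]
    congr 1
    rw [Matrix.star_eq_conjTranspose, Matrix.conjTranspose_smul, hA.eq, star_trivial]
  calc starRingEnd ℂ (Matrix.trace (Cᴴ * (NormedSpace.exp (s • A) * Bᴴ
        * NormedSpace.exp ((1 - s) • A))))
      = Matrix.trace ((Cᴴ * (NormedSpace.exp (s • A) * Bᴴ
          * NormedSpace.exp ((1 - s) • A)))ᴴ) := by
        rw [Matrix.trace_conjTranspose]; rfl
    _ = Matrix.trace ((NormedSpace.exp ((1 - s) • A) * B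
          * NormedSpace.exp (s • A)) * C) := by
        simp [Matrix.conjTranspose_mul, hexp, Matrix.mul_assoc]
    _ = Matrix.trace (B * (NormedSpace.exp (s • A) * C
          * NormedSpace.exp ((1 - s) • A))) := by
        rw [Matrix.trace_mul_cycle, Matrix.trace_mul_cycle, ← Matrix.mul_assoc,
          ← Matrix.mul_assoc, Matrix.trace_mul_comm]
        simp [Matrix.mul_assoc]

/-- Conjugate symmetry: `Tr(ξ† [X, [ρ]_θ([X†, ν])])` is the complex conjugate of
`Tr(ν† [X, [ρ]_θ([X†, ξ])])`, where `ρ = exp(A)` with `A` Hermitian. -/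
theorem trace_commutator_tilted_conj_symm (N : ℕ) (hN : 1 ≤ N)
    (A : Matrix (Fin N) (Fin N) ℂ) (hA : A.IsHermitian) (θ : ℝ)
    (X ξ ν : Matrix (Fin N) (Fin N) ℂ) :
    Matrix.trace (ξᴴ *
        (X * tilted A θ (Xᴴ * ν - ν * Xᴴ) - tilted A θ (Xᴴ * ν - ν * Xᴴ) * X))
    = starRingEnd ℂ (Matrix.trace (νᴴ *
        (X * tilted A θ (Xᴴ * ξ - ξ * Xᴴ) - tilted A θ (Xᴴ * ξ - ξ * Xᴴ) * X))) := by
  have comm : ∀ (η : Matrix (Fin N) (Fin N) ℂ) (T : Matrix (Fin N) (Fin N) ℂ),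
      Matrix.trace (ηᴴ * (X * T - T * X))
        = Matrix.trace ((ηᴴ * X - X * ηᴴ) * T) := by
    intro η T
    rw [Matrix.mul_sub, Matrix.sub_mul, Matrix.trace_sub, Matrix.trace_sub]
    congr 1
    · rw [Matrix.mul_assoc]
    · rw [← Matrix.mul_assoc, Matrix.trace_mul_cycle]
  rw [comm, comm, trace_mul_tilted A hA θ (ξᴴ * X - X * ξᴴ) (Xᴴ * ν - ν * Xᴴ)]
  have e1 : (Xᴴ * ν - ν * Xᴴ)ᴴ = νᴴ * X - X * νᴴ := by
    simp [Matrix.conjTranspose_sub, Matrix.conjTranspose_mul]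
  have e2 : (ξᴴ * X - X * ξᴴ)ᴴ = Xᴴ * ξ - ξ * Xᴴ := by
    simp [Matrix.conjTranspose_sub, Matrix.conjTranspose_mul]
  rw [e1, e2]
end

section
/- Let N ≥ 1, let A be a Hermitian N×N complex matrix, set ρ = exp(A), let θ ∈ ℝ, and let X, ξ be arbitrary N×N complex matrices. Then the trace Tr(ξ† · [X, [ρ]_θ([X†, ξ])]) is a nonnegative real number (its imaginary part is zero and its real part is ≥ 0), and it equals zero if and only if [X†, ξ] = 0. -/
open scoped Matrix.Norms.L2Operator

open Matrix

namespace TiltedAux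

variable {N : ℕ}

/-- The continuous linear map `M ↦ Tr(Yᴴ M)`. -/
noncomputable def traceL (Y : Matrix (Fin N) (Fin N) ℂ) :
    Matrix (Fin N) (Fin N) ℂ →L[ℂ] ℂ :=
  LinearMap.toContinuousLinearMap
    ((Matrix.traceLinearMap (Fin N) ℂ ℂ).comp (LinearMap.mulLeft ℂ Yᴴ))

lemma traceL_apply (Y M : Matrix (Fin N) (Fin N) ℂ) :
    traceL Y M = Matrix.trace (Yᴴ * M) := rfl

lemma trace_conj_mul_self (M : Matrix (Fin N) (Fin N) ℂ) :
    Matrix.trace (Mᴴ * M) = ((∑ i, ∑ j, Complex.normSq (M j i) : ℝ) : ℂ) := by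
  simp only [Matrix.trace, Matrix.diag, Matrix.mul_apply, Matrix.conjTranspose_apply]
  push_cast
  congr 1; ext i; congr 1; ext j
  rw [Complex.normSq_eq_conj_mul_self]; rfl

lemma expH {A : Matrix (Fin N) (Fin N) ℂ} (hA : A.IsHermitian) (t : ℝ) :
    (NormedSpace.exp (t • A))ᴴ = NormedSpace.exp (t • A) := by
  rw [← Matrix.exp_conjTranspose]
  congr 1
  rw [Matrix.conjTranspose_smul, star_trivial, hA.eq]

lemma exp_half (A : Matrix (Fin N) (Fin N) ℂ) (t : ℝ) :
    NormedSpace.exp (t • A) =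
      NormedSpace.exp ((t/2) • A) * NormedSpace.exp ((t/2) • A) := by
  rw [← Matrix.exp_add_of_commute _ _ (Commute.refl _), ← add_smul]
  norm_num

lemma eq_zero_of_exp_mul (A : Matrix (Fin N) (Fin N) ℂ) (t u : ℝ)
    (Y : Matrix (Fin N) (Fin N) ℂ)
    (h : NormedSpace.exp (t • A) * Y * NormedSpace.exp (u • A) = 0) : Y = 0 := by
  set B := NormedSpace.exp (t • A)
  set C := NormedSpace.exp (u • A)
  have hBd : IsUnit B.det := (Matrix.isUnit_iff_isUnit_det _).mp (Matrix.isUnit_exp _)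
  have hCd : IsUnit C.det := (Matrix.isUnit_iff_isUnit_det _).mp (Matrix.isUnit_exp _)
  calc Y = B⁻¹ * B * Y * (C * C⁻¹) := by
        rw [Matrix.nonsing_inv_mul _ hBd, Matrix.mul_nonsing_inv _ hCd, one_mul, mul_one]
    _ = B⁻¹ * (B * Y * C) * C⁻¹ := by simp only [mul_assoc]
    _ = 0 := by rw [h, mul_zero, zero_mul]

/-- `Tr(Yᴴ exp(sA) Y exp((1−s)A)) = Tr(Mᴴ M)` with `M = exp((s/2)A) Y exp(((1−s)/2)A)`. -/
lemma key {A : Matrix (Fin N) (Fin N) ℂ} (hA : A.IsHermitian)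
    (Y : Matrix (Fin N) (Fin N) ℂ) (s : ℝ) :
    Matrix.trace (Yᴴ * (NormedSpace.exp (s • A) * Y * NormedSpace.exp ((1 - s) • A)))
      = Matrix.trace
          ((NormedSpace.exp ((s/2) • A) * Y * NormedSpace.exp (((1-s)/2) • A))ᴴ *
           (NormedSpace.exp ((s/2) • A) * Y * NormedSpace.exp (((1-s)/2) • A))) := by
  set B := NormedSpace.exp ((s/2) • A) with hB
  set C := NormedSpace.exp (((1-s)/2) • A) with hC
  have hMc : (B * Y * C)ᴴ = C * (Yᴴ * B) := by
    rw [Matrix.conjTranspose_mul, Matrix.conjTranspose_mul, hB, hC, expH hA, expH hA]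
  rw [hMc]
  calc Matrix.trace (Yᴴ * (NormedSpace.exp (s • A) * Y * NormedSpace.exp ((1 - s) • A)))
      = Matrix.trace ((Yᴴ * B * (B * Y * C)) * C) := by
        rw [exp_half A s, exp_half A (1-s), ← hB, ← hC]
        simp only [mul_assoc]
    _ = Matrix.trace (C * (Yᴴ * B) * (B * Y * C)) := by
        rw [Matrix.trace_mul_comm]
        simp only [mul_assoc]

end TiltedAux

open TiltedAux in
/-- `Tr(ξ† [X, [ρ]_θ([X†, ξ])])` is real and nonnegative, and vanishes iff `[X†, ξ] = 0`,
where `ρ = exp(A)` with `A` Hermitian. -/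
theorem trace_commutator_tilted_self_nonneg (N : ℕ) (hN : 1 ≤ N)
    (A : Matrix (Fin N) (Fin N) ℂ) (hA : A.IsHermitian) (θ : ℝ)
    (X ξ : Matrix (Fin N) (Fin N) ℂ) :
    (Matrix.trace (ξᴴ *
        (X * tilted A θ (Xᴴ * ξ - ξ * Xᴴ) - tilted A θ (Xᴴ * ξ - ξ * Xᴴ) * X))).im = 0 ∧
    0 ≤ (Matrix.trace (ξᴴ *
        (X * tilted A θ (Xᴴ * ξ - ξ * Xᴴ) - tilted A θ (Xᴴ * ξ - ξ * Xᴴ) * X))).re ∧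
    (Matrix.trace (ξᴴ *
        (X * tilted A θ (Xᴴ * ξ - ξ * Xᴴ) - tilted A θ (Xᴴ * ξ - ξ * Xᴴ) * X)) = 0
      ↔ Xᴴ * ξ - ξ * Xᴴ = 0) := by
  set Y : Matrix (Fin N) (Fin N) ℂ := Xᴴ * ξ - ξ * Xᴴ with hYdef
  set T : Matrix (Fin N) (Fin N) ℂ := tilted A θ Y with hTdef
  -- Step 1: reduce to `Tr(Yᴴ T)`
  have hconj : Yᴴ = ξᴴ * X - X * ξᴴ := by
    rw [hYdef, Matrix.conjTranspose_sub, Matrix.conjTranspose_mul, Matrix.conjTranspose_mul,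
      Matrix.conjTranspose_conjTranspose]
  have h2 : Matrix.trace (ξᴴ * (T * X)) = Matrix.trace ((X * ξᴴ) * T) := by
    rw [← mul_assoc, Matrix.trace_mul_comm, ← mul_assoc]
  have hred : Matrix.trace (ξᴴ * (X * T - T * X)) = Matrix.trace (Yᴴ * T) := by
    rw [hconj, mul_sub, Matrix.trace_sub, sub_mul, Matrix.trace_sub, ← mul_assoc, h2]
  rw [hred]
  -- Step 2: the integrand and its properties
  set g : ℝ → Matrix (Fin N) (Fin N) ℂ := fun s => Real.exp (s * θ) •
    (NormedSpace.exp (s • A) * Y * NormedSpace.exp ((1 - s) • A)) with hgdef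
  set F : ℝ → ℂ := fun s =>
    Matrix.trace (Yᴴ * (NormedSpace.exp (s • A) * Y * NormedSpace.exp ((1 - s) • A)))
    with hFdef
  set h : ℝ → ℝ := fun s => (F s).re with hhdef
  have hFof : ∀ s : ℝ, F s = ((h s : ℝ) : ℂ) := by
    intro s
    have hs : F s = _ := (key hA Y s).trans (trace_conj_mul_self _)
    rw [hhdef]
    simp only [hs, Complex.ofReal_re]
  have hhnn : ∀ s : ℝ, 0 ≤ h s := by
    intro s
    have hs : F s = _ := (key hA Y s).trans (trace_conj_mul_self _)
    rw [hhdef]; simp only [hs, Complex.ofReal_re]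
    exact Finset.sum_nonneg fun i _ => Finset.sum_nonneg fun j _ => Complex.normSq_nonneg _
  -- continuity
  have hexp1 : Continuous fun s : ℝ => NormedSpace.exp (s • A) :=
    (continuous_iff_continuousAt.2 fun x => (NormedSpace.exp_analytic (𝕂 := ℂ) x).continuousAt).comp (continuous_id.smul continuous_const)
  have hexp2 : Continuous fun s : ℝ => NormedSpace.exp ((1 - s) • A) :=
    (continuous_iff_continuousAt.2 fun x => (NormedSpace.exp_analytic (𝕂 := ℂ) x).continuousAt).comp ((continuous_const.sub continuous_id).smul continuous_const)
  have htr : Continuous (Matrix.trace : Matrix (Fin N) (Fin N) ℂ → ℂ) :=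
    LinearMap.continuous_of_finiteDimensional (Matrix.traceLinearMap (Fin N) ℂ ℂ)
  have hF : Continuous F :=
    htr.comp (continuous_const.mul ((hexp1.mul continuous_const).mul hexp2))
  have hgc : Continuous g :=
    (Real.continuous_exp.comp (continuous_id.mul continuous_const)).smul
      ((hexp1.mul continuous_const).mul hexp2)
  have hgint : IntervalIntegrable g MeasureTheory.volume 0 1 :=
    hgc.intervalIntegrable 0 1
  have hphic : Continuous fun s : ℝ => Real.exp (s * θ) * h s :=
    (Real.continuous_exp.comp (continuous_id.mul continuous_const)).mul
      (Complex.continuous_re.comp hF)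
  set I : ℝ := ∫ s in (0:ℝ)..1, Real.exp (s * θ) * h s with hIdef
  have hInn : 0 ≤ I := by
    rw [hIdef]
    exact intervalIntegral.integral_nonneg (by norm_num)
      (fun s _ => mul_nonneg (Real.exp_nonneg _) (hhnn s))
  -- Step 3: compute the trace as a real number
  have hE : Matrix.trace (Yᴴ * T) = ((Real.exp (-θ/2) * I : ℝ) : ℂ) := by
    have step1 : Matrix.trace (Yᴴ * T)
        = Real.exp (-θ/2) • Matrix.trace (Yᴴ * ∫ s in (0:ℝ)..1, g s) := by
      rw [hTdef]
      show Matrix.trace (Yᴴ * (Real.exp (-θ/2) • ∫ s in (0:ℝ)..1, g s)) = _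
      rw [Matrix.mul_smul, Matrix.trace_smul]
    have step2 : Matrix.trace (Yᴴ * ∫ s in (0:ℝ)..1, g s)
        = ∫ s in (0:ℝ)..1, Matrix.trace (Yᴴ * g s) := by
      rw [← traceL_apply, ← (traceL Y).intervalIntegral_comp_comm hgint]
      rfl
    have step3 : (∫ s in (0:ℝ)..1, Matrix.trace (Yᴴ * g s))
        = ∫ s in (0:ℝ)..1, ((Real.exp (s * θ) * h s : ℝ) : ℂ) := by
      refine intervalIntegral.integral_congr fun s _ => ?_
      rw [hgdef]
      simp only [Matrix.mul_smul, Matrix.trace_smul]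
      rw [show Matrix.trace (Yᴴ * (NormedSpace.exp (s • A) * Y *
            NormedSpace.exp ((1 - s) • A))) = F s from rfl, hFof s]
      rw [Complex.real_smul, Complex.ofReal_mul]
    have step4 : (∫ s in (0:ℝ)..1, ((Real.exp (s * θ) * h s : ℝ) : ℂ))
        = ((I : ℝ) : ℂ) := by
      rw [hIdef]; exact RCLike.intervalIntegral_ofReal
    rw [step1, step2, step3, step4, Complex.real_smul, Complex.ofReal_mul]
  rw [hE]
  refine ⟨Complex.ofReal_im _, ?_, ?_⟩
  · rw [Complex.ofReal_re]
    exact mul_nonneg (Real.exp_nonneg _) hInn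
  constructor
  · -- vanishing implies commutator zero
    intro h0
    by_contra hYne
    have hhpos : ∀ s : ℝ, 0 < h s := by
      intro s
      refine lt_of_le_of_ne (hhnn s) fun heq => ?_
      have hsum := (key hA Y s).trans (trace_conj_mul_self _)
      set M : Matrix (Fin N) (Fin N) ℂ :=
        NormedSpace.exp ((s/2) • A) * Y * NormedSpace.exp (((1-s)/2) • A) with hMdef
      have hFs : F s = ((∑ i, ∑ j, Complex.normSq (M j i) : ℝ) : ℂ) := hsum
      have hs0 : (∑ i, ∑ j, Complex.normSq (M j i)) = 0 := by
        have : h s = ∑ i, ∑ j, Complex.normSq (M j i) := by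
          rw [hhdef]; simp only [hFs, Complex.ofReal_re]
        rw [← this, ← heq]
      have hM0 : M = 0 := by
        ext j i
        have h1 := (Finset.sum_eq_zero_iff_of_nonneg
          (fun i _ => Finset.sum_nonneg fun j _ => Complex.normSq_nonneg _)).mp hs0 i
          (Finset.mem_univ i)
        have h2 := (Finset.sum_eq_zero_iff_of_nonneg
          (fun j _ => Complex.normSq_nonneg _)).mp h1 j (Finset.mem_univ j)
        simpa using Complex.normSq_eq_zero.mp h2
      exact hYne (eq_zero_of_exp_mul A (s/2) ((1-s)/2) Y hM0)
    have hIpos : 0 < I := by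
      rw [hIdef]
      refine intervalIntegral.intervalIntegral_pos_of_pos_on
        (hphic.intervalIntegrable 0 1) (fun s _ => ?_) one_pos
      exact mul_pos (Real.exp_pos _) (hhpos s)
    have : (0:ℝ) < Real.exp (-θ/2) * I := mul_pos (Real.exp_pos _) hIpos
    rw [Complex.ofReal_eq_zero] at h0
    exact this.ne' h0
  · -- commutator zero implies vanishing
    intro hY0
    have hh0 : ∀ s : ℝ, h s = 0 := by
      intro s
      rw [hhdef]
      simp only [hFdef, hY0, Matrix.conjTranspose_zero, Matrix.zero_mul, Matrix.trace_zero,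
        Complex.zero_re]
    have hI0 : I = 0 := by
      rw [hIdef,
        intervalIntegral.integral_congr (g := fun _ => (0:ℝ)) fun s _ => by rw [hh0 s, mul_zero]]
      simp
    rw [hI0, mul_zero, Complex.ofReal_zero]
end

section
/- Let N ≥ 1, let A be a Hermitian N×N complex matrix, set ρ = exp(A), let θ ∈ ℝ, and let X be any N×N complex matrix. Then the conjugate transpose of [ρ]_θ(X) equals [ρ]_{−θ}(X†), i.e., ([ρ]_θ(X))† = [ρ]_{−θ}(X†). -/
open scoped Matrix.Norms.L2Operator

open Matrix

/-- `([ρ]_θ(X))† = [ρ]_{−θ}(X†)` for `ρ = exp(A)` with `A` Hermitian. -/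
theorem tilted_conjTranspose (N : ℕ) (hN : 1 ≤ N)
    (A : Matrix (Fin N) (Fin N) ℂ) (hA : A.IsHermitian) (θ : ℝ)
    (X : Matrix (Fin N) (Fin N) ℂ) :
    (tilted A θ X)ᴴ = tilted A (-θ) Xᴴ := by
  unfold tilted
  have hcont : ∀ (Y : Matrix (Fin N) (Fin N) ℂ) (t : ℝ), Continuous fun s : ℝ =>
      Real.exp (s * t) • (NormedSpace.exp (s • A) * Y * NormedSpace.exp ((1 - s) • A)) := by
    intro Y t
    apply Continuous.fun_smul
    · exact (Real.continuous_exp.comp (continuous_id.mul continuous_const))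
    · apply Continuous.fun_mul
      · exact (((continuous_iff_continuousAt.2 fun (x : Matrix (Fin N) (Fin N) ℂ) =>
          (NormedSpace.exp_analytic (𝕂 := ℂ) x).continuousAt).comp (continuous_id.smul continuous_const))).mul
          continuous_const
      · exact (continuous_iff_continuousAt.2 fun (x : Matrix (Fin N) (Fin N) ℂ) =>
          (NormedSpace.exp_analytic (𝕂 := ℂ) x).continuousAt).comp ((continuous_const.sub continuous_id).smul
          continuous_const)
  have hint : IntervalIntegrable (fun s : ℝ => Real.exp (s * θ) •
      (NormedSpace.exp (s • A) * X * NormedSpace.exp ((1 - s) • A)))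
      MeasureTheory.volume 0 1 := (hcont X θ).intervalIntegrable 0 1
  rw [conjTranspose_smul]
  have hstar : (∫ s in (0:ℝ)..1, Real.exp (s * θ) •
      (NormedSpace.exp (s • A) * X * NormedSpace.exp ((1 - s) • A)))ᴴ
      = ∫ s in (0:ℝ)..1, Real.exp (s * θ) •
      (NormedSpace.exp ((1 - s) • A) * Xᴴ * NormedSpace.exp (s • A)) := by
    have := ((starL' ℝ : Matrix (Fin N) (Fin N) ℂ ≃L[ℝ] Matrix (Fin N) (Fin N) ℂ)
      : Matrix (Fin N) (Fin N) ℂ →L[ℝ] Matrix (Fin N) (Fin N) ℂ).intervalIntegral_comp_comm hint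
    simp only [ContinuousLinearEquiv.coe_coe, starL'_apply, Matrix.star_eq_conjTranspose] at this
    rw [← this]
    congr 1
    ext s : 1
    rw [conjTranspose_smul, conjTranspose_mul, conjTranspose_mul,
      ← Matrix.exp_conjTranspose, ← Matrix.exp_conjTranspose]
    simp [hA.eq, mul_assoc]
  rw [hstar]
  have hsub : (∫ s in (0:ℝ)..1, Real.exp (s * θ) •
      (NormedSpace.exp ((1 - s) • A) * Xᴴ * NormedSpace.exp (s • A)))
      = ∫ s in (0:ℝ)..1, Real.exp ((1 - s) * θ) •
      (NormedSpace.exp (s • A) * Xᴴ * NormedSpace.exp ((1 - s) • A)) := by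
    have := intervalIntegral.integral_comp_sub_left (a := (0:ℝ)) (b := 1)
      (fun s : ℝ => Real.exp ((1 - s) * θ) •
        (NormedSpace.exp (s • A) * Xᴴ * NormedSpace.exp ((1 - s) • A))) 1
    simp only [sub_sub_cancel, sub_zero, sub_self] at this
    rw [← this]
  rw [hsub]
  have hfac : ∀ s : ℝ, Real.exp ((1 - s) * θ) = Real.exp θ * Real.exp (s * -θ) := by
    intro s
    rw [← Real.exp_add]
    ring_nf
  simp only [hfac, mul_smul]
  rw [intervalIntegral.integral_smul, smul_smul]
  congr 1
  rw [star_trivial, ← Real.exp_add]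
  ring_nf
end

section
/- Let N ≥ 1, let A be a Hermitian N×N complex matrix with Tr(exp(A)) = 1, set ρ = exp(A), let θ ∈ ℝ, and let X be any N×N complex matrix. Then the real part of Tr(X† · [ρ]_θ(X)) satisfies Re Tr(X† · [ρ]_θ(X)) ≤ (1/2) · (e^(θ/2) + e^(−θ/2)) · ‖X‖², where ‖X‖ is the ℓ²→ℓ² operator norm (spectral norm) of X. -/
open scoped Matrix.Norms.L2Operator

open Matrix

private lemma exp_smul_eq_conj {N : ℕ} {A : Matrix (Fin N) (Fin N) ℂ}
    (hA : A.IsHermitian) (r : ℝ) :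
    NormedSpace.exp (r • A)
      = (hA.eigenvectorUnitary : Matrix (Fin N) (Fin N) ℂ)
        * Matrix.diagonal (fun i => ((Real.exp (r * hA.eigenvalues i) : ℝ) : ℂ))
        * star (hA.eigenvectorUnitary : Matrix (Fin N) (Fin N) ℂ) := by
  set U : Matrix (Fin N) (Fin N) ℂ := (hA.eigenvectorUnitary : Matrix (Fin N) (Fin N) ℂ)
    with hUdef
  have hsUU : star U * U = 1 := Matrix.mem_unitaryGroup_iff'.mp hA.eigenvectorUnitary.2
  have hinv : U⁻¹ = star U := Matrix.inv_eq_left_inv hsUU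
  have h1 : r • A = U * Matrix.diagonal (fun i => ((r * hA.eigenvalues i : ℝ) : ℂ)) * U⁻¹ := by
    rw [hinv]
    conv_lhs => rw [hA.spectral_theorem, Unitary.conjStarAlgAut_apply]
    rw [mul_assoc, ← mul_smul_comm, ← smul_mul_assoc, ← mul_assoc]
    congr 2
    ext i j
    simp only [Matrix.smul_apply, Matrix.diagonal, Matrix.of_apply, Function.comp,
      Complex.real_smul, smul_eq_mul, mul_ite, mul_zero]
    split <;> push_cast <;> try exact rfl
  rw [h1, Matrix.exp_conj U _
      ⟨⟨U, star U, Matrix.mem_unitaryGroup_iff.mp hA.eigenvectorUnitary.2, hsUU⟩, rfl⟩, hinv,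
    Matrix.exp_diagonal, Pi.exp_def]
  simp only [← Complex.exp_eq_exp_ℂ, ← Complex.ofReal_exp]

private lemma trace_conj_conj {n : Type*} [Fintype n] [DecidableEq n]
    (U X D₁ D₂ : Matrix n n ℂ) (h1 : star U * U = 1) (h2 : U * star U = 1) :
    Matrix.trace (Xᴴ * (U * D₁ * star U * X * (U * D₂ * star U)))
      = Matrix.trace ((star U * X * U)ᴴ * D₁ * (star U * X * U) * D₂) := by
  have h1' : Uᴴ * U = 1 := h1
  have h2' : U * Uᴴ = 1 := h2
  set Y : Matrix n n ℂ := star U * X * U with hYdef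
  have hXY : X = U * Y * star U := by
    rw [hYdef]
    calc X = 1 * X * 1 := by rw [one_mul, mul_one]
    _ = (U * star U) * X * (U * star U) := by rw [h2]
    _ = U * (star U * X * U) * star U := by simp only [mul_assoc]
  have hc1 : ∀ Z : Matrix n n ℂ, Uᴴ * (U * Z) = Z := fun Z => by
    rw [← mul_assoc, h1', one_mul]
  have hc2 : ∀ Z : Matrix n n ℂ, U * (Uᴴ * Z) = Z := fun Z => by
    rw [← mul_assoc, h2', one_mul]
  rw [hXY]
  simp only [Matrix.star_eq_conjTranspose, Matrix.conjTranspose_mul,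
    Matrix.conjTranspose_conjTranspose]
  simp only [mul_assoc, hc1, hc2]
  rw [Matrix.trace_mul_comm]
  simp only [mul_assoc, h1', mul_one]

private lemma re_trace_diag {n : Type*} [Fintype n] [DecidableEq n]
    (Y : Matrix n n ℂ) (a b : n → ℝ) :
    (Matrix.trace (Yᴴ * Matrix.diagonal (fun i => (a i : ℂ)) * Y
        * Matrix.diagonal (fun j => (b j : ℂ)))).re
      = ∑ j, ∑ i, a i * b j * Complex.normSq (Y i j) := by
  have hterm : ∀ (z : ℂ) (r t : ℝ),
      ((starRingEnd ℂ) z * (r : ℂ) * z * (t : ℂ)).re = r * t * Complex.normSq z := by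
    intro z r t
    have : (starRingEnd ℂ) z * (r : ℂ) * z * (t : ℂ)
        = ((r : ℂ) * (t : ℂ)) * (z * (starRingEnd ℂ) z) := by ring
    rw [this, Complex.mul_conj]
    simp [Complex.mul_re]
  have hentry : ∀ j, (Yᴴ * Matrix.diagonal (fun i => (a i : ℂ)) * Y
      * Matrix.diagonal (fun j => (b j : ℂ))) j j
      = ∑ i, (starRingEnd ℂ) (Y i j) * (a i : ℂ) * Y i j * (b j : ℂ) := by
    intro j
    rw [Matrix.mul_diagonal, Matrix.mul_apply, Finset.sum_mul]
    refine Finset.sum_congr rfl fun i _ => ?_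
    rw [Matrix.mul_diagonal, Matrix.conjTranspose_apply]
    rfl
  simp only [Matrix.trace, Matrix.diag, hentry, Complex.re_sum]
  refine Finset.sum_congr rfl fun j _ => ?_
  refine Finset.sum_congr rfl fun i _ => ?_
  exact hterm (Y i j) (a i) (b j)

private lemma col_sum_le {N : ℕ} (Y : Matrix (Fin N) (Fin N) ℂ) (j : Fin N) :
    ∑ i, Complex.normSq (Y i j) ≤ ‖Y‖ ^ 2 := by
  classical
  set v : EuclideanSpace ℂ (Fin N) := EuclideanSpace.single j (1 : ℂ) with hv
  have hnv : ‖v‖ = 1 := by simp [hv, EuclideanSpace.norm_single]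
  have hle := Matrix.l2_opNorm_mulVec Y v
  rw [hnv, mul_one] at hle
  have hw : ∀ i, (Y *ᵥ (v : Fin N → ℂ)) i = Y i j := by
    intro i
    simp [hv, Matrix.mulVec, dotProduct, EuclideanSpace.single_apply]
  have hnorm : ‖(EuclideanSpace.equiv (Fin N) ℂ).symm (Y *ᵥ (v : Fin N → ℂ))‖ ^ 2
      = ∑ i, Complex.normSq (Y i j) := by
    rw [EuclideanSpace.norm_eq, Real.sq_sqrt (by positivity)]
    refine Finset.sum_congr rfl fun i _ => ?_
    simp [hw i, Complex.sq_norm]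
  rw [← hnorm]
  have h0 : (0:ℝ) ≤ ‖Y‖ := norm_nonneg _
  nlinarith [norm_nonneg ((EuclideanSpace.equiv (Fin N) ℂ).symm (Y *ᵥ (v : Fin N → ℂ)))]

private lemma row_sum_le {N : ℕ} (Y : Matrix (Fin N) (Fin N) ℂ) (i : Fin N) :
    ∑ j, Complex.normSq (Y i j) ≤ ‖Y‖ ^ 2 := by
  have h := col_sum_le Yᴴ i
  rw [Matrix.l2_opNorm_conjTranspose] at h
  refine le_trans (le_of_eq ?_) h
  refine Finset.sum_congr rfl fun j _ => ?_
  simp [Matrix.conjTranspose_apply, Complex.normSq_conj]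

/-- For a density matrix `ρ = exp(A)` (`A` Hermitian, `Tr(exp A) = 1`),
`Re Tr(X† [ρ]_θ(X)) ≤ (1/2)(e^(θ/2) + e^(−θ/2)) ‖X‖²`, with `‖X‖` the spectral norm. -/
theorem re_trace_tilted_le_opNorm_sq (N : ℕ) (hN : 1 ≤ N)
    (A : Matrix (Fin N) (Fin N) ℂ) (hA : A.IsHermitian)
    (htr : Matrix.trace (NormedSpace.exp A) = 1) (θ : ℝ)
    (X : Matrix (Fin N) (Fin N) ℂ) :
    (Matrix.trace (Xᴴ * tilted A θ X)).re ≤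
      1/2 * (Real.exp (θ/2) + Real.exp (-θ/2)) * ‖X‖^2 := by
  classical
  set U : Matrix (Fin N) (Fin N) ℂ := (hA.eigenvectorUnitary : Matrix (Fin N) (Fin N) ℂ)
    with hUdef
  have hsUU : star U * U = 1 := Matrix.mem_unitaryGroup_iff'.mp hA.eigenvectorUnitary.2
  have hUsU : U * star U = 1 := Matrix.mem_unitaryGroup_iff.mp hA.eigenvectorUnitary.2
  set Y : Matrix (Fin N) (Fin N) ℂ := star U * X * U with hYdef
  have hYnorm : ‖Y‖ = ‖X‖ := by
    rw [hYdef, hUdef, CStarRing.norm_mul_mem_unitary _ hA.eigenvectorUnitary.2,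
      CStarRing.norm_mem_unitary_mul _ (Unitary.star_mem hA.eigenvectorUnitary.2)]
  -- sum of exponentials of eigenvalues is 1
  have hsum : ∑ i, Real.exp (hA.eigenvalues i) = 1 := by
    have hexpA : NormedSpace.exp A
        = U * Matrix.diagonal (fun i => ((Real.exp (hA.eigenvalues i) : ℝ) : ℂ)) * star U := by
      have h := exp_smul_eq_conj hA 1
      rw [one_smul] at h
      simpa [one_mul] using h
    have h1 : Matrix.trace (NormedSpace.exp A)
        = ∑ i, ((Real.exp (hA.eigenvalues i) : ℝ) : ℂ) := by
      rw [hexpA, Matrix.trace_mul_cycle, hsUU, one_mul, Matrix.trace_diagonal]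
    have h2 := congrArg Complex.re (h1.symm.trans htr)
    simpa [Complex.re_sum, Complex.exp_ofReal_re] using h2
  -- the trace as an explicit double sum
  have htrace : ∀ s : ℝ,
      (Matrix.trace (Xᴴ * (NormedSpace.exp (s • A) * X
        * NormedSpace.exp ((1 - s) • A)))).re
      = ∑ j, ∑ i, Real.exp (s * hA.eigenvalues i) * Real.exp ((1 - s) * hA.eigenvalues j)
          * Complex.normSq (Y i j) := by
    intro s
    rw [exp_smul_eq_conj hA s, exp_smul_eq_conj hA (1 - s), ← hUdef,
      trace_conj_conj U X _ _ hsUU hUsU, ← hYdef]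
    exact re_trace_diag Y (fun i => Real.exp (s * hA.eigenvalues i))
      (fun j => Real.exp ((1 - s) * hA.eigenvalues j))
  -- pointwise bound on the trace
  have hpoint : ∀ s ∈ Set.Icc (0:ℝ) 1,
      (Matrix.trace (Xᴴ * (NormedSpace.exp (s • A) * X
        * NormedSpace.exp ((1 - s) • A)))).re ≤ ‖X‖^2 := by
    rintro s ⟨hs0, hs1⟩
    rw [htrace s]
    have hconv : ∀ a b : ℝ, Real.exp (s * a) * Real.exp ((1 - s) * b)
        ≤ s * Real.exp a + (1 - s) * Real.exp b := by
      intro a b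
      rw [← Real.exp_add]
      have h := convexOn_exp.2 (Set.mem_univ a) (Set.mem_univ b) hs0 (by linarith)
        (by ring : s + (1 - s) = 1)
      simpa [smul_eq_mul, add_comm] using h
    have h₁ : ∑ j, ∑ i, s * Real.exp (hA.eigenvalues i) * Complex.normSq (Y i j)
        = s * ∑ i, Real.exp (hA.eigenvalues i) * ∑ j, Complex.normSq (Y i j) := by
      rw [Finset.sum_comm]
      simp [Finset.mul_sum, mul_assoc]
    have h₂ : ∑ j, ∑ i, (1 - s) * Real.exp (hA.eigenvalues j) * Complex.normSq (Y i j)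
        = (1 - s) * ∑ j, Real.exp (hA.eigenvalues j) * ∑ i, Complex.normSq (Y i j) := by
      simp [Finset.mul_sum, mul_assoc]
    calc ∑ j, ∑ i, Real.exp (s * hA.eigenvalues i) * Real.exp ((1 - s) * hA.eigenvalues j)
          * Complex.normSq (Y i j)
        ≤ ∑ j, ∑ i, (s * Real.exp (hA.eigenvalues i) + (1 - s) * Real.exp (hA.eigenvalues j))
            * Complex.normSq (Y i j) := by
          refine Finset.sum_le_sum fun j _ => Finset.sum_le_sum fun i _ => ?_
          exact mul_le_mul_of_nonneg_right (hconv _ _) (Complex.normSq_nonneg _)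
      _ = s * ∑ i, Real.exp (hA.eigenvalues i) * ∑ j, Complex.normSq (Y i j)
          + (1 - s) * ∑ j, Real.exp (hA.eigenvalues j) * ∑ i, Complex.normSq (Y i j) := by
          simp only [add_mul, Finset.sum_add_distrib]
          rw [h₁, h₂]
      _ ≤ s * ∑ i, Real.exp (hA.eigenvalues i) * ‖X‖^2
          + (1 - s) * ∑ j, Real.exp (hA.eigenvalues j) * ‖X‖^2 := by
          refine add_le_add ?_ ?_
          · refine mul_le_mul_of_nonneg_left (Finset.sum_le_sum fun i _ => ?_) hs0
            exact mul_le_mul_of_nonneg_left (hYnorm ▸ row_sum_le Y i) (Real.exp_nonneg _)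
          · refine mul_le_mul_of_nonneg_left (Finset.sum_le_sum fun j _ => ?_) (by linarith)
            exact mul_le_mul_of_nonneg_left (hYnorm ▸ col_sum_le Y j) (Real.exp_nonneg _)
      _ = ‖X‖^2 := by
          rw [← Finset.sum_mul, hsum, one_mul]
          ring
  -- continuity and integrability
  letI : NormedAlgebra ℚ (Matrix (Fin N) (Fin N) ℂ) :=
    { (inferInstance : Algebra ℚ (Matrix (Fin N) (Fin N) ℂ)) with
      norm_smul_le := fun q x => by
        rw [← algebraMap_smul ℂ q x]
        exact (norm_smul_le _ _).trans (le_of_eq (by simp [← Rat.norm_cast_real])) }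
  have hmatexp : Continuous fun s : ℝ =>
      NormedSpace.exp (s • A) * X * NormedSpace.exp ((1 - s) • A) :=
    (((NormedSpace.exp_continuous).comp (continuous_id.smul continuous_const)).mul
      continuous_const).mul
      ((NormedSpace.exp_continuous).comp ((continuous_const.sub continuous_id).smul
        continuous_const))
  have hmat : Continuous fun s : ℝ => Real.exp (s * θ) •
      (NormedSpace.exp (s • A) * X * NormedSpace.exp ((1 - s) • A)) :=
    (Real.continuous_exp.comp (continuous_id.mul continuous_const)).smul hmatexp
  have hint : IntervalIntegrable (fun s : ℝ => Real.exp (s * θ) •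
      (NormedSpace.exp (s • A) * X * NormedSpace.exp ((1 - s) • A)))
      MeasureTheory.volume 0 1 := hmat.intervalIntegrable 0 1
  -- the ℝ-linear functional M ↦ (trace (Xᴴ * M)).re
  let Lf : Matrix (Fin N) (Fin N) ℂ →ₗ[ℝ] ℝ :=
    { toFun := fun M => (Matrix.trace (Xᴴ * M)).re
      map_add' := by intro M₁ M₂; simp [Matrix.mul_add]
      map_smul' := by
        intro r M
        simp [Matrix.mul_smul, Matrix.trace_smul, Complex.real_smul] }
  let φ : Matrix (Fin N) (Fin N) ℂ →L[ℝ] ℝ := LinearMap.toContinuousLinearMap Lf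
  have key : (Matrix.trace (Xᴴ * tilted A θ X)).re
      = Real.exp (-θ/2) * ∫ s in (0:ℝ)..1, Real.exp (s * θ) *
          (Matrix.trace (Xᴴ * (NormedSpace.exp (s • A) * X
            * NormedSpace.exp ((1 - s) • A)))).re := by
    have hφ : (Matrix.trace (Xᴴ * tilted A θ X)).re = φ (tilted A θ X) := rfl
    rw [hφ, tilted, _root_.map_smul, ← φ.intervalIntegral_comp_comm hint]
    simp only [smul_eq_mul]
    congr 1
    refine intervalIntegral.integral_congr fun s _ => ?_
    rw [_root_.map_smul, smul_eq_mul]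
    rfl
  have hgcont : Continuous fun s : ℝ => Real.exp (s * θ) *
      (Matrix.trace (Xᴴ * (NormedSpace.exp (s • A) * X
        * NormedSpace.exp ((1 - s) • A)))).re :=
    (Real.continuous_exp.comp (continuous_id.mul continuous_const)).mul
      (φ.continuous.comp hmatexp)
  -- compare the integrand with an affine function
  have hmono : (∫ s in (0:ℝ)..1, Real.exp (s * θ) *
        (Matrix.trace (Xᴴ * (NormedSpace.exp (s • A) * X
          * NormedSpace.exp ((1 - s) • A)))).re)
      ≤ ∫ s in (0:ℝ)..1, (‖X‖^2 + ((Real.exp θ - 1) * ‖X‖^2) * s) := by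
    refine intervalIntegral.integral_mono_on (by norm_num)
      (hgcont.intervalIntegrable 0 1)
      ((continuous_const.add (continuous_const.mul continuous_id)).intervalIntegrable 0 1)
      fun s hs => ?_
    obtain ⟨hs0, hs1⟩ := hs
    have hxe : Real.exp (s * θ) ≤ 1 + s * (Real.exp θ - 1) := by
      have h := convexOn_exp.2 (Set.mem_univ 0) (Set.mem_univ θ) (by linarith : (0:ℝ) ≤ 1 - s)
        hs0 (by ring : (1 - s) + s = 1)
      simp only [smul_eq_mul, mul_zero, zero_add, Real.exp_zero, mul_one] at h
      linarith
    have hC : (0:ℝ) ≤ ‖X‖^2 := by positivity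
    calc Real.exp (s * θ) * (Matrix.trace (Xᴴ * (NormedSpace.exp (s • A) * X
          * NormedSpace.exp ((1 - s) • A)))).re
        ≤ Real.exp (s * θ) * ‖X‖^2 :=
          mul_le_mul_of_nonneg_left (hpoint s ⟨hs0, hs1⟩) (Real.exp_nonneg _)
      _ ≤ (1 + s * (Real.exp θ - 1)) * ‖X‖^2 := mul_le_mul_of_nonneg_right hxe hC
      _ = ‖X‖^2 + ((Real.exp θ - 1) * ‖X‖^2) * s := by ring
  have hval : (∫ s in (0:ℝ)..1, (‖X‖^2 + ((Real.exp θ - 1) * ‖X‖^2) * s))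
      = ‖X‖^2 + (Real.exp θ - 1) * ‖X‖^2 * (1/2) := by
    have hii : IntervalIntegrable (fun s : ℝ => ((Real.exp θ - 1) * ‖X‖^2) * s)
        MeasureTheory.volume 0 1 :=
      (continuous_const.mul continuous_id).intervalIntegrable 0 1
    rw [intervalIntegral.integral_add (intervalIntegrable_const) hii,
      intervalIntegral.integral_const, intervalIntegral.integral_const_mul,
      integral_id]
    norm_num
  have hce : Real.exp (-θ/2) * Real.exp θ = Real.exp (θ/2) := by
    rw [← Real.exp_add]; ring_nf
  calc (Matrix.trace (Xᴴ * tilted A θ X)).re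
      = Real.exp (-θ/2) * ∫ s in (0:ℝ)..1, Real.exp (s * θ) *
          (Matrix.trace (Xᴴ * (NormedSpace.exp (s • A) * X
            * NormedSpace.exp ((1 - s) • A)))).re := key
    _ ≤ Real.exp (-θ/2) * (‖X‖^2 + (Real.exp θ - 1) * ‖X‖^2 * (1/2)) := by
        rw [← hval]
        exact mul_le_mul_of_nonneg_left hmono (Real.exp_nonneg _)
    _ = 1/2 * (Real.exp (θ/2) + Real.exp (-θ/2)) * ‖X‖^2 := by
        linear_combination (‖X‖^2 / 2) * hce
end

section
/- Let N ≥ 1, let A be a Hermitian N×N complex matrix, set ρ = exp(A), let θ ∈ ℝ, and let X be any N×N complex matrix. Then Re Tr(X† · [ρ]_θ(X)) ≤ (1/2) · ( e^(θ/2) · Re Tr(X·X†·ρ) + e^(−θ/2) · Re Tr(X†·X·ρ) ). -/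
open scoped Matrix.Norms.L2Operator

open Matrix

/-- For `ρ = exp(A)` with `A` Hermitian,
`Re Tr(X† [ρ]_θ(X)) ≤ (1/2)(e^(θ/2) Re Tr(X X† ρ) + e^(−θ/2) Re Tr(X† X ρ))`. -/
-- auxiliary lemmas
lemma exp_smul_herm {N : ℕ} (A : Matrix (Fin N) (Fin N) ℂ) (hA : A.IsHermitian) (t : ℝ) :
    NormedSpace.exp (t • A) =
      (hA.eigenvectorUnitary : Matrix (Fin N) (Fin N) ℂ) *
        diagonal (fun i => (Real.exp (t * hA.eigenvalues i) : ℂ)) *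
        (hA.eigenvectorUnitary : Matrix (Fin N) (Fin N) ℂ)ᴴ := by
  set U := (hA.eigenvectorUnitary : Matrix (Fin N) (Fin N) ℂ) with hUdef
  have hU2 : Uᴴ * U = 1 := by
    simpa [Matrix.star_eq_conjTranspose] using (hA.eigenvectorUnitary).2.1
  have hUinv : U⁻¹ = Uᴴ := Matrix.inv_eq_left_inv hU2
  have hunit : IsUnit U := ⟨Unitary.toUnits hA.eigenvectorUnitary, rfl⟩
  have hsA : t • A = U * diagonal (fun i => ((t * hA.eigenvalues i : ℝ) : ℂ)) * U⁻¹ := by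
    rw [hUinv]
    conv_lhs => rw [hA.spectral_theorem]
    rw [Unitary.conjStarAlgAut_apply]
    rw [Matrix.star_eq_conjTranspose, ← smul_mul_assoc, ← mul_smul_comm]
    congr 2
    ext i j
    by_cases h : i = j <;>
      simp [Matrix.diagonal_apply, h, Complex.real_smul]
  rw [hsA, Matrix.exp_conj _ _ hunit, Matrix.exp_diagonal, Pi.exp_def, hUinv]
  simp only [← Complex.exp_eq_exp_ℂ, ← Complex.ofReal_exp]

lemma trace_diag {N : ℕ} (B : Matrix (Fin N) (Fin N) ℂ) (a b : Fin N → ℝ) :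
    trace (Bᴴ * diagonal (fun i => (a i : ℂ)) * B * diagonal (fun j => (b j : ℂ)))
      = ((∑ j, ∑ i, Complex.normSq (B i j) * a i * b j : ℝ) : ℂ) := by
  rw [Matrix.trace]
  push_cast
  refine Finset.sum_congr rfl fun j _ => ?_
  rw [Matrix.diag_apply, Matrix.mul_diagonal, Matrix.mul_apply, Finset.sum_mul]
  refine Finset.sum_congr rfl fun i _ => ?_
  rw [Matrix.mul_diagonal, Matrix.conjTranspose_apply]
  rw [Complex.star_def]
  have : (starRingEnd ℂ) (B i j) * ↑(a i) * B i j * ↑(b j)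
      = ((starRingEnd ℂ) (B i j) * B i j) * ↑(a i) * ↑(b j) := by ring
  rw [this, ← Complex.normSq_eq_conj_mul_self]


/-- main -/
theorem re_trace_tilted_le (N : ℕ) (hN : 1 ≤ N)
    (A : Matrix (Fin N) (Fin N) ℂ) (hA : A.IsHermitian) (θ : ℝ)
    (X : Matrix (Fin N) (Fin N) ℂ) :
    (Matrix.trace (Xᴴ * tilted A θ X)).re ≤
      1/2 * (Real.exp (θ/2) * (Matrix.trace (X * Xᴴ * NormedSpace.exp A)).re
        + Real.exp (-θ/2) * (Matrix.trace (Xᴴ * X * NormedSpace.exp A)).re) := by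
  set U := (hA.eigenvectorUnitary : Matrix (Fin N) (Fin N) ℂ) with hUdef
  have hU2 : Uᴴ * U = 1 := by
    simpa [Matrix.star_eq_conjTranspose] using (hA.eigenvectorUnitary).2.1
  have hU1 : U * Uᴴ = 1 := by
    simpa [Matrix.star_eq_conjTranspose] using (hA.eigenvectorUnitary).2.2
  set lam := hA.eigenvalues with hlam
  set B := Uᴴ * X * U with hB
  set c : Fin N → Fin N → ℝ := fun i j => Complex.normSq (B i j) with hc
  have hBH : Bᴴ = Uᴴ * Xᴴ * U := by
    simp [hB, Matrix.conjTranspose_mul, mul_assoc]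
  have hcancel : ∀ M : Matrix (Fin N) (Fin N) ℂ, U * (Uᴴ * M) = M := fun M => by
    rw [← mul_assoc, hU1, one_mul]
  -- the three trace identities
  have hdiag1 : (diagonal (fun j => ((1:ℝ) : ℂ)) : Matrix (Fin N) (Fin N) ℂ) = 1 := by
    simp
  have htr : ∀ a b : Fin N → ℝ,
      (trace (Bᴴ * diagonal (fun i => (a i : ℂ)) * B * diagonal (fun j => (b j : ℂ)))).re
        = ∑ j, ∑ i, c i j * a i * b j := by
    intro a b
    rw [trace_diag, Complex.ofReal_re]
  -- trace with exponentials at parameter s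
  have hs : ∀ s : ℝ,
      (trace (Xᴴ * (NormedSpace.exp (s • A) * X * NormedSpace.exp ((1-s) • A)))).re
        = ∑ j, ∑ i, c i j * Real.exp (s * lam i) * Real.exp ((1-s) * lam j) := by
    intro s
    rw [exp_smul_herm A hA s, exp_smul_herm A hA (1-s)]
    have hmat : Xᴴ * (U * diagonal (fun i => (Real.exp (s * lam i) : ℂ)) * Uᴴ * X *
          (U * diagonal (fun i => (Real.exp ((1-s) * lam i) : ℂ)) * Uᴴ))
        = (Xᴴ * (U * diagonal (fun i => (Real.exp (s * lam i) : ℂ)) * Uᴴ * X *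
          (U * diagonal (fun i => (Real.exp ((1-s) * lam i) : ℂ))))) * Uᴴ := by
      simp [mul_assoc]
    rw [hmat, Matrix.trace_mul_comm]
    have hmat2 : Uᴴ * (Xᴴ * (U * diagonal (fun i => (Real.exp (s * lam i) : ℂ)) * Uᴴ * X *
          (U * diagonal (fun i => (Real.exp ((1-s) * lam i) : ℂ)))))
        = Bᴴ * diagonal (fun i => (Real.exp (s * lam i) : ℂ)) * B *
            diagonal (fun i => (Real.exp ((1-s) * lam i) : ℂ)) := by
      rw [hBH, hB]
      simp [mul_assoc]
    rw [hmat2, htr]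
  -- trace identities for ρ
  have hexpA : NormedSpace.exp A
      = U * diagonal (fun i => (Real.exp (lam i) : ℂ)) * Uᴴ := by
    have := exp_smul_herm A hA 1
    simpa using this
  have hT1 : (trace (X * Xᴴ * NormedSpace.exp A)).re = ∑ j, ∑ i, c i j * Real.exp (lam i) := by
    rw [hexpA]
    have hmat : X * Xᴴ * (U * diagonal (fun i => (Real.exp (lam i) : ℂ)) * Uᴴ)
        = (X * Xᴴ * (U * diagonal (fun i => (Real.exp (lam i) : ℂ)))) * Uᴴ := by
      simp [mul_assoc]
    rw [hmat, Matrix.trace_mul_comm]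
    have hmat2 : Uᴴ * (X * Xᴴ * (U * diagonal (fun i => (Real.exp (lam i) : ℂ))))
        = B * (Bᴴ * diagonal (fun i => (Real.exp (lam i) : ℂ))) := by
      rw [hBH, hB]
      simp [mul_assoc, hcancel]
    rw [hmat2, Matrix.trace_mul_comm]
    have hmat3 : Bᴴ * diagonal (fun i => (Real.exp (lam i) : ℂ)) * B
        = Bᴴ * diagonal (fun i => (Real.exp (lam i) : ℂ)) * B *
            diagonal (fun j => ((1:ℝ) : ℂ)) := by
      rw [hdiag1, mul_one]
    rw [hmat3, htr]
    simp
  have hT2 : (trace (Xᴴ * X * NormedSpace.exp A)).re = ∑ j, ∑ i, c i j * Real.exp (lam j) := by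
    rw [hexpA]
    have hmat : Xᴴ * X * (U * diagonal (fun i => (Real.exp (lam i) : ℂ)) * Uᴴ)
        = (Xᴴ * X * (U * diagonal (fun i => (Real.exp (lam i) : ℂ)))) * Uᴴ := by
      simp [mul_assoc]
    rw [hmat, Matrix.trace_mul_comm]
    have hmat2 : Uᴴ * (Xᴴ * X * (U * diagonal (fun i => (Real.exp (lam i) : ℂ))))
        = Bᴴ * diagonal (fun j => ((1:ℝ):ℂ)) * B * diagonal (fun i => (Real.exp (lam i) : ℂ)) := by
      rw [hBH, hB, hdiag1]
      simp [mul_assoc, hcancel]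
    rw [hmat2, htr]
    simp
  -- the continuous linear functional M ↦ re(trace(Xᴴ M))
  let Lfun : Matrix (Fin N) (Fin N) ℂ →ₗ[ℝ] ℝ :=
    { toFun := fun M => (trace (Xᴴ * M)).re
      map_add' := fun M M' => by simp [Matrix.mul_add]
      map_smul' := fun r M => by
        simp [Matrix.mul_smul, Complex.smul_re] }
  let L : Matrix (Fin N) (Fin N) ℂ →L[ℝ] ℝ := LinearMap.toContinuousLinearMap Lfun
  have hL : ∀ M, L M = (trace (Xᴴ * M)).re := fun M => rfl
  -- continuity of the integrand
  have hMatc : Continuous (fun s : ℝ =>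
      NormedSpace.exp (s • A) * X * NormedSpace.exp ((1-s) • A)) := by
    apply Continuous.mul
    · apply Continuous.mul
      · exact (continuous_iff_continuousAt.2 fun x => (NormedSpace.exp_analytic (𝕂 := ℂ) x).continuousAt).comp (continuous_id.smul continuous_const)
      · exact continuous_const
    · exact (continuous_iff_continuousAt.2 fun x => (NormedSpace.exp_analytic (𝕂 := ℂ) x).continuousAt).comp ((continuous_const.sub continuous_id).smul
        continuous_const)
  have hFc : Continuous (fun s : ℝ => Real.exp (s * θ) •
      (NormedSpace.exp (s • A) * X * NormedSpace.exp ((1-s) • A))) :=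
    (Real.continuous_exp.comp (continuous_id.mul continuous_const)).smul hMatc
  have hFint : IntervalIntegrable (fun s : ℝ => Real.exp (s * θ) •
      (NormedSpace.exp (s • A) * X * NormedSpace.exp ((1-s) • A)))
      MeasureTheory.volume 0 1 := hFc.intervalIntegrable 0 1
  -- pull the trace inside the integral
  set f : ℝ → ℝ := fun s => Real.exp (-θ/2) * (Real.exp (s * θ) *
      (trace (Xᴴ * (NormedSpace.exp (s • A) * X * NormedSpace.exp ((1-s) • A)))).re) with hf
  have hfc : Continuous f := by
    apply continuous_const.mul
    apply (Real.continuous_exp.comp (continuous_id.mul continuous_const)).mul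
    exact L.continuous.comp hMatc
  have key : (trace (Xᴴ * tilted A θ X)).re = ∫ s in (0:ℝ)..1, f s := by
    rw [tilted, Matrix.mul_smul, Matrix.trace_smul, Complex.smul_re, ← hL,
      ← L.intervalIntegral_comp_comm hFint]
    rw [smul_eq_mul, ← intervalIntegral.integral_const_mul]
    refine intervalIntegral.integral_congr fun s _ => ?_
    rw [L.map_smul, hL]
    simp [hf, smul_eq_mul]
  set C1 := Real.exp (θ/2) * (∑ j, ∑ i, c i j * Real.exp (lam i)) with hC1
  set C2 := Real.exp (-θ/2) * (∑ j, ∑ i, c i j * Real.exp (lam j)) with hC2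
  set g : ℝ → ℝ := fun s => s * C1 + (1-s) * C2 with hg
  have hfg : ∀ s ∈ Set.Icc (0:ℝ) 1, f s ≤ g s := by
    intro s hsmem
    obtain ⟨hs0, hs1⟩ := hsmem
    have lhs_eq : f s = ∑ j, ∑ i, c i j *
        Real.exp (s*(θ/2 + lam i) + (1-s)*(-θ/2 + lam j)) := by
      rw [hf]
      simp only [hs s, Finset.mul_sum]
      refine Finset.sum_congr rfl fun j _ => Finset.sum_congr rfl fun i _ => ?_
      rw [show s*(θ/2 + lam i) + (1-s)*(-θ/2 + lam j)
          = -θ/2 + (s*θ + (s*lam i + (1-s)*lam j)) from by ring,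
        Real.exp_add, Real.exp_add, Real.exp_add]
      ring
    have rhs_eq : g s = ∑ j, ∑ i, c i j *
        (s * Real.exp (θ/2 + lam i) + (1-s) * Real.exp (-θ/2 + lam j)) := by
      have step : ∀ j i, c i j *
          (s * Real.exp (θ/2 + lam i) + (1-s) * Real.exp (-θ/2 + lam j))
          = s * (Real.exp (θ/2) * (c i j * Real.exp (lam i)))
            + (1-s) * (Real.exp (-θ/2) * (c i j * Real.exp (lam j))) := by
        intro j i
        rw [Real.exp_add, Real.exp_add]
        ring
      simp only [step, Finset.sum_add_distrib, ← Finset.mul_sum]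
      rfl
    rw [lhs_eq, rhs_eq]
    refine Finset.sum_le_sum fun j _ => Finset.sum_le_sum fun i _ => ?_
    refine mul_le_mul_of_nonneg_left ?_ (Complex.normSq_nonneg _)
    have hconv := convexOn_exp.2 (Set.mem_univ (θ/2 + lam i))
      (Set.mem_univ (-θ/2 + lam j)) hs0 (by linarith : (0:ℝ) ≤ 1 - s)
      (by ring : s + (1 - s) = 1)
    simpa [smul_eq_mul] using hconv
  have hgi : ∫ s in (0:ℝ)..1, g s = 1/2 * (C1 + C2) := by
    have h1 : IntervalIntegrable (fun s : ℝ => s * C1) MeasureTheory.volume 0 1 :=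
      (continuous_id'.mul continuous_const).intervalIntegrable 0 1
    have h2 : IntervalIntegrable (fun s : ℝ => (1 - s) * C2) MeasureTheory.volume 0 1 :=
      ((continuous_const.sub continuous_id').mul continuous_const).intervalIntegrable 0 1
    have hone : (∫ s in (0:ℝ)..1, (1 - s)) = 1/2 := by
      rw [intervalIntegral.integral_sub intervalIntegrable_const
        (continuous_id'.intervalIntegrable 0 1), integral_id]
      simp
      norm_num
    have : ∫ s in (0:ℝ)..1, g s = ∫ s in (0:ℝ)..1, (s * C1 + (1 - s) * C2) := rfl
    rw [this, intervalIntegral.integral_add h1 h2,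
      intervalIntegral.integral_mul_const, intervalIntegral.integral_mul_const,
      integral_id, hone]
    ring
  calc (Matrix.trace (Xᴴ * tilted A θ X)).re = ∫ s in (0:ℝ)..1, f s := key
    _ ≤ ∫ s in (0:ℝ)..1, g s := by
        refine intervalIntegral.integral_mono_on (by norm_num)
          (hfc.intervalIntegrable 0 1)
          ((by fun_prop : Continuous g).intervalIntegrable 0 1) hfg
    _ = 1/2 * (C1 + C2) := hgi
    _ = 1/2 * (Real.exp (θ/2) * (Matrix.trace (X * Xᴴ * NormedSpace.exp A)).re
        + Real.exp (-θ/2) * (Matrix.trace (Xᴴ * X * NormedSpace.exp A)).re) := by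
        rw [hT1, hT2]
end

section
/- Let N ≥ 1, let x, y : Fin N → ℝ, and let χ be a permutation of Fin N such that for all indices n, m, if xₙ ≥ xₘ then y_{χ(n)} ≥ y_{χ(m)}. Then Σₙ |xₙ − yₙ| ≥ Σₙ |xₙ − y_{χ(n)}|. -/
private lemma exchange {a b c d : ℝ} (hac : c ≤ a) (hdb : d ≤ b) :
    |a - b| + |c - d| ≤ |a - d| + |c - b| := by
  rcases abs_cases (a - b) with ⟨h1, _⟩ | ⟨h1, _⟩ <;>
    rcases abs_cases (c - d) with ⟨h2, _⟩ | ⟨h2, _⟩ <;>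
      linarith [le_abs_self (a - d), neg_abs_le (a - d), le_abs_self (c - b), neg_abs_le (c - b)]

private lemma key {ι : Type*} [DecidableEq ι] (x z : ι → ℝ) (s : Finset ι)
    (hmono : ∀ m ∈ s, ∀ n ∈ s, x m ≤ x n → z m ≤ z n) :
    ∀ σ : ι → ι, Set.BijOn σ s s →
      ∑ n ∈ s, |x n - z n| ≤ ∑ n ∈ s, |x n - z (σ n)| := by
  induction s using Finset.strongInduction with
  | _ s ih =>
    intro σ hσ
    rcases s.eq_empty_or_nonempty with rfl | hne
    · simp
    obtain ⟨n₀, hn₀, hmax⟩ := s.exists_max_image x hne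
    obtain ⟨m₀, hm₀, hσm₀⟩ := hσ.surjOn (by simpa using hn₀)
    simp only [Finset.mem_coe] at hm₀
    set σ' : ι → ι := σ ∘ Equiv.swap n₀ m₀ with hσ'def
    have hσ'n₀ : σ' n₀ = n₀ := by simp [hσ'def, Equiv.swap_apply_left, hσm₀]
    have hswap : Set.BijOn (Equiv.swap n₀ m₀) (s : Set ι) s := by
      apply (Equiv.swap n₀ m₀).bijOn
      intro a
      rcases eq_or_ne a n₀ with rfl | ha1
      · simp [Equiv.swap_apply_left, hm₀, hn₀]
      rcases eq_or_ne a m₀ with rfl | ha2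
      · simp [Equiv.swap_apply_right, hm₀, hn₀]
      · simp [Equiv.swap_apply_of_ne_of_ne ha1 ha2]
    have hσ'bij : Set.BijOn σ' (s : Set ι) s := hσ.comp hswap
    -- step 1: exchange inequality  ∑ |x - z ∘ σ'| ≤ ∑ |x - z ∘ σ|
    have hstep : ∑ n ∈ s, |x n - z (σ' n)| ≤ ∑ n ∈ s, |x n - z (σ n)| := by
      rcases eq_or_ne m₀ n₀ with rfl | hne'
      · have : σ' = σ := by
          funext a; simp [hσ'def, Equiv.swap_self]
        rw [this]
      · have hm₀' : m₀ ∈ s.erase n₀ := Finset.mem_erase.mpr ⟨hne', hm₀⟩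
        have hσ'm₀ : σ' m₀ = σ n₀ := by simp [hσ'def, Equiv.swap_apply_right]
        have hrest : ∀ n ∈ (s.erase n₀).erase m₀, σ' n = σ n := by
          intro n hn
          obtain ⟨hn1, hn2⟩ := Finset.mem_erase.mp hn
          obtain ⟨hn3, _⟩ := Finset.mem_erase.mp hn2
          simp [hσ'def, Equiv.swap_apply_of_ne_of_ne hn3 hn1]
        have hpair : |x n₀ - z (σ' n₀)| + |x m₀ - z (σ' m₀)| ≤
            |x n₀ - z (σ n₀)| + |x m₀ - z (σ m₀)| := by
          rw [hσ'n₀, hσ'm₀, hσm₀]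
          exact exchange (hmax m₀ hm₀)
            (hmono (σ n₀) (hσ.mapsTo hn₀) n₀ hn₀ (hmax _ (hσ.mapsTo hn₀)))
        have e1 : ∀ g : ι → ℝ, ∑ n ∈ s, g n =
            g n₀ + (g m₀ + ∑ n ∈ (s.erase n₀).erase m₀, g n) := by
          intro g
          rw [Finset.add_sum_erase _ g hm₀', Finset.add_sum_erase _ g hn₀]
        rw [e1 (fun n => |x n - z (σ' n)|), e1 (fun n => |x n - z (σ n)|)]
        have e3 : ∑ n ∈ (s.erase n₀).erase m₀, |x n - z (σ' n)|
            = ∑ n ∈ (s.erase n₀).erase m₀, |x n - z (σ n)| :=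
          Finset.sum_congr rfl fun n hn => by rw [hrest n hn]
        linarith [hpair, e3]
    -- step 2: induction on s.erase n₀ with σ'
    have hbij' : Set.BijOn σ' (↑(s.erase n₀)) ↑(s.erase n₀) := by
      have hmem : ∀ a ∈ s.erase n₀, σ' a ∈ s.erase n₀ := by
        intro a ha
        obtain ⟨ha1, ha2⟩ := Finset.mem_erase.mp ha
        refine Finset.mem_erase.mpr ⟨fun hc => ha1 ?_, hσ'bij.mapsTo ha2⟩
        exact hσ'bij.injOn ha2 hn₀ (hc.trans hσ'n₀.symm)
      refine ⟨fun a ha => ?_, hσ'bij.injOn.mono ?_, fun b hb => ?_⟩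
      · exact Finset.mem_coe.mpr (hmem a (Finset.mem_coe.mp ha))
      · exact_mod_cast Finset.coe_subset.mpr (Finset.erase_subset _ _)
      · have hb' : b ∈ s.erase n₀ := Finset.mem_coe.mp hb
        obtain ⟨hbne, hbs⟩ := Finset.mem_erase.mp hb'
        obtain ⟨a, ha, hab⟩ := hσ'bij.surjOn (Finset.mem_coe.mpr hbs)
        refine ⟨a, Finset.mem_coe.mpr (Finset.mem_erase.mpr ⟨?_, Finset.mem_coe.mp ha⟩), hab⟩
        rintro rfl
        exact hbne (by rw [← hab, hσ'n₀])
    have hih := ih (s.erase n₀) (Finset.erase_ssubset hn₀)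
      (fun m hm n hn => hmono m (Finset.mem_of_mem_erase hm) n (Finset.mem_of_mem_erase hn))
      σ' hbij'
    have e2 : ∀ g : ι → ℝ, ∑ n ∈ s, g n = g n₀ + ∑ n ∈ s.erase n₀, g n := by
      intro g; rw [Finset.add_sum_erase _ g hn₀]
    calc ∑ n ∈ s, |x n - z n|
        = |x n₀ - z (σ' n₀)| + ∑ n ∈ s.erase n₀, |x n - z n| := by
          rw [hσ'n₀]; exact e2 _
      _ ≤ |x n₀ - z (σ' n₀)| + ∑ n ∈ s.erase n₀, |x n - z (σ' n)| := by linarith [hih]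
      _ = ∑ n ∈ s, |x n - z (σ' n)| := (e2 (fun n => |x n - z (σ' n)|)).symm
      _ ≤ ∑ n ∈ s, |x n - z (σ n)| := hstep

/-- If `χ` is a permutation pairing `y` to `x` in a similarly ordered way
(`xₙ ≥ xₘ → y_{χ(n)} ≥ y_{χ(m)}`), then `Σₙ |xₙ − yₙ| ≥ Σₙ |xₙ − y_{χ(n)}|`. -/
theorem sum_abs_sub_perm_le (N : ℕ) (hN : 1 ≤ N) (x y : Fin N → ℝ)
    (χ : Equiv.Perm (Fin N))
    (h : ∀ n m : Fin N, x m ≤ x n → y (χ m) ≤ y (χ n)) :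
    ∑ n, |x n - y (χ n)| ≤ ∑ n, |x n - y n| := by
  have := key x (fun n => y (χ n)) Finset.univ
    (fun m _ n _ hxy => h n m hxy) χ.symm
    (by simpa using (χ.symm.bijective.bijOn_univ))
  simpa using this
end

section
/- Let N ≥ 1, let R be an N×N real matrix with R_{mn} ≥ 0 for all m ≠ n, let p^eq : Fin N → ℝ with p^eq_n > 0 for all n satisfy the detailed balance condition R_{nm}·p^eq_m = R_{mn}·p^eq_n for all n, m, and let p : Fin N → ℝ with p_n > 0 for all n. Define f_n := −(ln p_n − ln p^eq_n − 1). Then for every index n: Σ_{m≠n} R_{nm} · p^eq_m · Φ(p_n/p^eq_n, p_m/p^eq_m) · (f_n − f_m) = Σ_{m≠n} ( R_{nm}·p_m − R_{mn}·p_n ), where Φ is the logarithmic mean. -/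
lemma logMean_mul_log_sub (x y : ℝ) (hx : 0 < x) (hy : 0 < y) :
    logMean x y * (Real.log y - Real.log x) = y - x := by
  unfold logMean
  by_cases h : x = y
  · simp [h]
  · have hlog : Real.log x ≠ Real.log y :=
      fun he => h (Real.log_injOn_pos (Set.mem_Ioi.mpr hx) (Set.mem_Ioi.mpr hy) he)
    rw [if_neg h]
    have hne : Real.log x - Real.log y ≠ 0 := sub_ne_zero.mpr hlog
    have : Real.log y - Real.log x = -(Real.log x - Real.log y) := by ring
    rw [this, mul_neg, div_mul_cancel₀ _ hne]
    ring

/-- With `fₙ = −(ln pₙ − ln p^eqₙ − 1)` and detailed balance `R_{nm} p^eq_m = R_{mn} p^eq_n`,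
`Σ_{m≠n} R_{nm} p^eq_m Φ(pₙ/p^eqₙ, pₘ/p^eqₘ) (fₙ − fₘ) = Σ_{m≠n} (R_{nm} pₘ − R_{mn} pₙ)`. -/
theorem master_equation_alternative_form (N : ℕ) (hN : 1 ≤ N)
    (R : Matrix (Fin N) (Fin N) ℝ) (hR : ∀ m n : Fin N, m ≠ n → 0 ≤ R m n)
    (peq : Fin N → ℝ) (hpeq : ∀ n, 0 < peq n)
    (hdb : ∀ n m : Fin N, R n m * peq m = R m n * peq n)
    (p : Fin N → ℝ) (hp : ∀ n, 0 < p n)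
    (f : Fin N → ℝ) (hf : ∀ n, f n = -(Real.log (p n) - Real.log (peq n) - 1)) :
    ∀ n : Fin N,
      ∑ m ∈ Finset.univ.filter (· ≠ n),
          R n m * peq m * logMean (p n / peq n) (p m / peq m) * (f n - f m)
      = ∑ m ∈ Finset.univ.filter (· ≠ n), (R n m * p m - R m n * p n) := by
  intro n
  apply Finset.sum_congr rfl
  intro m _
  have hx : 0 < p n / peq n := div_pos (hp n) (hpeq n)
  have hy : 0 < p m / peq m := div_pos (hp m) (hpeq m)
  have hfd : f n - f m = Real.log (p m / peq m) - Real.log (p n / peq n) := by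
    rw [hf n, hf m, Real.log_div (hp m).ne' (hpeq m).ne',
      Real.log_div (hp n).ne' (hpeq n).ne']
    ring
  have key := logMean_mul_log_sub _ _ hx hy
  rw [hfd, mul_assoc, key]
  have hdbnm := hdb n m
  have hpeqn := (hpeq n).ne'
  have hpeqm := (hpeq m).ne'
  field_simp
  linear_combination (-(p n)) * hdbnm
end

section
/- Let N ≥ 1, let R be an N×N real matrix with R_{mn} ≥ 0 for all m ≠ n, let p^eq : Fin N → ℝ with p^eq_n > 0 satisfy detailed balance R_{nm}·p^eq_m = R_{mn}·p^eq_n for all n, m, and let p : Fin N → ℝ with p_n > 0. Assume irreducibility: the undirected graph on Fin N with an edge between n and m (n ≠ m) whenever R_{nm} > 0 is connected. Define the linear map K_p on ℝ^N by (K_p v)_n := Σ_{m≠n} R_{nm} · p^eq_m · Φ(p_n/p^eq_n, p_m/p^eq_m) · (v_n − v_m). Then for every v ∈ ℝ^N, K_p v = 0 if and only if v is a constant vector, i.e., there exists c ∈ ℝ with v_n = c for all n. -/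
/-- The Onsager-type matrix `K_p` acting on a vector `v`:
`(K_p v)_n = Σ_{m≠n} R_{nm} p^eq_m Φ(p_n/p^eq_n, p_m/p^eq_m) (v_n − v_m)`. -/
noncomputable def Kop {N : ℕ} (R : Matrix (Fin N) (Fin N) ℝ) (peq p v : Fin N → ℝ) :
    Fin N → ℝ :=
  fun n => ∑ m ∈ Finset.univ.filter (· ≠ n),
    R n m * peq m * logMean (p n / peq n) (p m / peq m) * (v n - v m)

lemma logMean_pos {x y : ℝ} (hx : 0 < x) (hy : 0 < y) : 0 < logMean x y := by
  unfold logMean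
  split
  · exact hx
  · rename_i h
    rcases lt_or_gt_of_ne h with h' | h'
    · have := Real.log_lt_log hx h'
      apply div_pos_iff.mpr
      right
      constructor <;> linarith
    · have := Real.log_lt_log hy h'
      apply div_pos <;> linarith

/-- For an irreducible rate matrix satisfying detailed balance, `K_p v = 0` iff `v` is
a constant vector. -/
theorem Kop_eq_zero_iff_const (N : ℕ) (hN : 1 ≤ N)
    (R : Matrix (Fin N) (Fin N) ℝ) (hR : ∀ m n : Fin N, m ≠ n → 0 ≤ R m n)
    (peq : Fin N → ℝ) (hpeq : ∀ n, 0 < peq n)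
    (hdb : ∀ n m : Fin N, R n m * peq m = R m n * peq n)
    (p : Fin N → ℝ) (hp : ∀ n, 0 < p n)
    (hconn : (SimpleGraph.fromRel (fun n m : Fin N => 0 < R n m)).Connected)
    (v : Fin N → ℝ) :
    Kop R peq p v = 0 ↔ ∃ c : ℝ, ∀ n, v n = c := by
  constructor
  · intro h0
    have hNe : (Finset.univ : Finset (Fin N)).Nonempty := by
      have : NeZero N := ⟨by omega⟩
      exact Finset.univ_nonempty
    obtain ⟨n0, -, hmax⟩ := Finset.exists_max_image Finset.univ v hNe
    have step : ∀ k, v k = v n0 → ∀ m,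
        (SimpleGraph.fromRel (fun n m : Fin N => 0 < R n m)).Adj k m → v m = v n0 := by
      intro k hk m hadj
      obtain ⟨hne, hrel⟩ := hadj
      have hRkm : 0 < R k m := by
        rcases hrel with h | h
        · exact h
        · have := hdb k m
          nlinarith [hpeq k, hpeq m]
      have hk0 : Kop R peq p v k = 0 := congrFun h0 k
      have hnonneg : ∀ m' ∈ Finset.univ.filter (· ≠ k),
          0 ≤ R k m' * peq m' * logMean (p k / peq k) (p m' / peq m') * (v k - v m') := by
        intro m' hm'
        have hne' : m' ≠ k := (Finset.mem_filter.mp hm').2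
        have h1 : 0 ≤ R k m' := hR k m' (Ne.symm hne')
        have h3 : 0 < logMean (p k / peq k) (p m' / peq m') :=
          logMean_pos (div_pos (hp k) (hpeq k)) (div_pos (hp m') (hpeq m'))
        have h4 : 0 ≤ v k - v m' := by
          have := hmax m' (Finset.mem_univ m'); rw [hk]; linarith
        exact mul_nonneg (mul_nonneg (mul_nonneg h1 (hpeq m').le) h3.le) h4
      have hterm := (Finset.sum_eq_zero_iff_of_nonneg hnonneg).mp hk0 m
        (Finset.mem_filter.mpr ⟨Finset.mem_univ m, Ne.symm hne⟩)
      have hfac : 0 < R k m * peq m * logMean (p k / peq k) (p m / peq m) :=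
        mul_pos (mul_pos hRkm (hpeq m))
          (logMean_pos (div_pos (hp k) (hpeq k)) (div_pos (hp m) (hpeq m)))
      have : v k - v m = 0 := by
        rcases mul_eq_zero.mp hterm with h | h
        · exact absurd h hfac.ne'
        · exact h
      linarith [hk, this]
    have key : ∀ (a b : Fin N)
        (_ : (SimpleGraph.fromRel (fun n m : Fin N => 0 < R n m)).Walk a b),
        v b = v n0 → v a = v n0 := by
      intro a b w
      induction w with
      | nil => exact id
      | cons hadj w ih => exact fun hb => step _ (ih hb) _ hadj.symm
    refine ⟨v n0, fun m => ?_⟩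
    obtain ⟨w⟩ := hconn.preconnected m n0
    exact key m n0 w rfl
  · rintro ⟨c, hcv⟩
    funext n
    simp [Kop, hcv]
end

section
/- Let N ≥ 1, let R be an N×N real matrix with R_{mn} ≥ 0 for all m ≠ n, let p^eq : Fin N → ℝ with p^eq_n > 0 satisfy detailed balance R_{nm}·p^eq_m = R_{mn}·p^eq_n, let p : Fin N → ℝ with p_n > 0, and assume the undirected graph with an edge between n and m whenever R_{nm} > 0 is connected. Define (K_p v)_n := Σ_{m≠n} R_{nm} · p^eq_m · Φ(p_n/p^eq_n, p_m/p^eq_m) · (v_n − v_m). Then for every u ∈ ℝ^N with Σ_n u_n = 0, there exists a unique v ∈ ℝ^N such that K_p v = u and Σ_n v_n = 0. -/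
lemma logMean_comm (x y : ℝ) : logMean x y = logMean y x := by
  unfold logMean
  rcases eq_or_ne x y with h | h
  · simp [h]
  · rw [if_neg h, if_neg (Ne.symm h), ← neg_sub y x,
      ← neg_sub (Real.log y) (Real.log x), neg_div_neg_eq]

lemma sum_offdiag_comm {N : ℕ} (g : Fin N → Fin N → ℝ) :
    ∑ n, ∑ m ∈ Finset.univ.filter (· ≠ n), g n m
      = ∑ n, ∑ m ∈ Finset.univ.filter (· ≠ n), g m n := by
  simp only [Finset.sum_filter]
  rw [Finset.sum_comm]
  refine Finset.sum_congr rfl fun n _ => Finset.sum_congr rfl fun m _ => ?_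
  exact if_congr ne_comm rfl rfl

/-- For an irreducible rate matrix satisfying detailed balance, every `u` with `Σ u_n = 0` has
a unique preimage `v` under `K_p` with `Σ v_n = 0`. -/
theorem existsUnique_Kop_eq (N : ℕ) (hN : 1 ≤ N)
    (R : Matrix (Fin N) (Fin N) ℝ) (hR : ∀ m n : Fin N, m ≠ n → 0 ≤ R m n)
    (peq : Fin N → ℝ) (hpeq : ∀ n, 0 < peq n)
    (hdb : ∀ n m : Fin N, R n m * peq m = R m n * peq n)
    (p : Fin N → ℝ) (hp : ∀ n, 0 < p n)
    (hconn : (SimpleGraph.fromRel (fun n m : Fin N => 0 < R n m)).Connected)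
    (u : Fin N → ℝ) (hu : ∑ n, u n = 0) :
    ∃! v : Fin N → ℝ, Kop R peq p v = u ∧ ∑ n, v n = 0 := by
  -- the symmetric weights
  set W : Fin N → Fin N → ℝ :=
    fun n m => R n m * peq m * logMean (p n / peq n) (p m / peq m) with hW
  have hWsymm : ∀ n m, W n m = W m n := by
    intro n m
    simp only [hW]
    rw [hdb n m, logMean_comm]
  have hWnonneg : ∀ n m, n ≠ m → 0 ≤ W n m := by
    intro n m h
    exact mul_nonneg (mul_nonneg (hR n m h) (hpeq m).le)
      (logMean_pos (div_pos (hp n) (hpeq n)) (div_pos (hp m) (hpeq m))).le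
  have hWpos : ∀ n m, 0 < R n m → 0 < W n m := by
    intro n m h
    exact mul_pos (mul_pos h (hpeq m))
      (logMean_pos (div_pos (hp n) (hpeq n)) (div_pos (hp m) (hpeq m)))
  have hKopW : ∀ v : Fin N → ℝ, Kop R peq p v =
      fun n => ∑ m ∈ Finset.univ.filter (· ≠ n), W n m * (v n - v m) := fun v => rfl
  -- column sums vanish
  have hKsum : ∀ v : Fin N → ℝ, ∑ n, Kop R peq p v n = 0 := by
    intro v
    have h2 := sum_offdiag_comm (fun n m => W n m * (v n - v m))
    have h3 : ∑ n, ∑ m ∈ Finset.univ.filter (· ≠ n), W m n * (v m - v n)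
        = -∑ n, ∑ m ∈ Finset.univ.filter (· ≠ n), W n m * (v n - v m) := by
      rw [← Finset.sum_neg_distrib]
      refine Finset.sum_congr rfl fun n _ => ?_
      rw [← Finset.sum_neg_distrib]
      refine Finset.sum_congr rfl fun m _ => ?_
      rw [hWsymm n m]; ring
    have : ∑ n, Kop R peq p v n
        = ∑ n, ∑ m ∈ Finset.univ.filter (· ≠ n), W n m * (v n - v m) := by
      rw [hKopW v]
    rw [this]
    linarith [h2, h3, this]
  -- the quadratic form
  have hquad : ∀ v : Fin N → ℝ, 2 * ∑ n, v n * Kop R peq p v n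
      = ∑ n, ∑ m ∈ Finset.univ.filter (· ≠ n), W n m * (v n - v m) ^ 2 := by
    intro v
    have hA : ∑ n, v n * Kop R peq p v n
        = ∑ n, ∑ m ∈ Finset.univ.filter (· ≠ n), v n * (W n m * (v n - v m)) := by
      refine Finset.sum_congr rfl fun n _ => ?_
      rw [hKopW v, Finset.mul_sum]
    have hB := sum_offdiag_comm (fun n m => v n * (W n m * (v n - v m)))
    rw [two_mul, hA]
    nth_rewrite 1 [hB]
    rw [← Finset.sum_add_distrib]
    refine Finset.sum_congr rfl fun n _ => ?_
    rw [← Finset.sum_add_distrib]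
    refine Finset.sum_congr rfl fun m _ => ?_
    rw [hWsymm n m]; ring
  -- the kernel on the zero-sum hyperplane is trivial
  have hker : ∀ v : Fin N → ℝ, Kop R peq p v = 0 → ∑ n, v n = 0 → v = 0 := by
    intro v hKv hsum
    have hq0 : ∑ n, ∑ m ∈ Finset.univ.filter (· ≠ n), W n m * (v n - v m) ^ 2 = 0 := by
      rw [← hquad v, hKv]
      simp
    have hinner : ∀ n, ∀ m ∈ Finset.univ.filter (· ≠ n), 0 ≤ W n m * (v n - v m) ^ 2 := by
      intro n m hm
      exact mul_nonneg (hWnonneg n m (Finset.mem_filter.mp hm).2.symm) (sq_nonneg _)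
    have houter := (Finset.sum_eq_zero_iff_of_nonneg
      (fun n _ => Finset.sum_nonneg (hinner n))).mp hq0
    have hterm : ∀ n m, m ≠ n → W n m * (v n - v m) ^ 2 = 0 := by
      intro n m hm
      have h1 := (Finset.sum_eq_zero_iff_of_nonneg (hinner n)).mp
        (houter n (Finset.mem_univ n))
      exact h1 m (Finset.mem_filter.mpr ⟨Finset.mem_univ m, hm⟩)
    have hedge : ∀ n m : Fin N,
        (SimpleGraph.fromRel (fun n m : Fin N => 0 < R n m)).Adj n m → v n = v m := by
      intro n m h
      rw [SimpleGraph.fromRel_adj] at h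
      obtain ⟨hne, h | h⟩ := h
      · have ht := hterm n m hne.symm
        have hWp := hWpos n m h
        have : (v n - v m) ^ 2 = 0 := by
          rcases mul_eq_zero.mp ht with h' | h'
          · exact absurd h' hWp.ne'
          · exact h'
        have := pow_eq_zero_iff (n := 2) (by norm_num) |>.mp this
        linarith [sub_eq_zero.mp this]
      · have ht := hterm m n hne
        have hWp := hWpos m n h
        have : (v m - v n) ^ 2 = 0 := by
          rcases mul_eq_zero.mp ht with h' | h'
          · exact absurd h' hWp.ne'
          · exact h'
        have := pow_eq_zero_iff (n := 2) (by norm_num) |>.mp this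
        linarith [sub_eq_zero.mp this]
    have hreach : ∀ n m : Fin N, v n = v m := by
      intro n m
      obtain ⟨wlk⟩ := hconn.preconnected n m
      induction wlk with
      | nil => rfl
      | cons h _ ih => exact (hedge _ _ h).trans ih
    have hconst : ∀ n, v n = v ⟨0, hN⟩ := fun n => hreach n ⟨0, hN⟩
    have hsumconst : ∑ n, v n = (N : ℝ) * v ⟨0, hN⟩ := by
      rw [Finset.sum_congr rfl (fun n _ => hconst n)]
      simp [Finset.sum_const, Finset.card_univ, mul_comm]
    have hv0 : v ⟨0, hN⟩ = 0 := by
      have hN' : (N : ℝ) ≠ 0 := by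
        exact_mod_cast Nat.one_le_iff_ne_zero.mp hN
      have := hsumconst.symm.trans hsum
      exact (mul_eq_zero.mp this).resolve_left hN'
    funext n
    rw [hconst n, hv0]; rfl
  -- linear map structure
  let F : (Fin N → ℝ) →ₗ[ℝ] (Fin N → ℝ) :=
    { toFun := Kop R peq p
      map_add' := by
        intro a b; funext n
        simp only [Kop, Pi.add_apply, ← Finset.sum_add_distrib]
        exact Finset.sum_congr rfl fun m _ => by ring
      map_smul' := by
        intro c a; funext n
        simp only [Kop, Pi.smul_apply, smul_eq_mul, RingHom.id_apply, Finset.mul_sum]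
        exact Finset.sum_congr rfl fun m _ => by ring }
  let S : (Fin N → ℝ) →ₗ[ℝ] ℝ :=
    { toFun := fun v => ∑ n, v n
      map_add' := fun a b => by simp [Finset.sum_add_distrib]
      map_smul' := fun c a => by simp [Finset.mul_sum] }
  have hmaps : ∀ v ∈ LinearMap.ker S, F v ∈ LinearMap.ker S := by
    intro v _
    exact LinearMap.mem_ker.mpr (hKsum v)
  let F' : LinearMap.ker S →ₗ[ℝ] LinearMap.ker S := F.restrict hmaps
  have hinj : Function.Injective F' := by
    rw [← LinearMap.ker_eq_bot, LinearMap.ker_eq_bot']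
    rintro ⟨v, hv⟩ hFv
    have h0 : Kop R peq p v = 0 := congrArg Subtype.val hFv
    exact Subtype.ext (hker v h0 (LinearMap.mem_ker.mp hv))
  have hsurj : Function.Surjective F' := (LinearMap.injective_iff_surjective).mp hinj
  have hu' : u ∈ LinearMap.ker S := LinearMap.mem_ker.mpr hu
  obtain ⟨⟨v, hv⟩, hveq⟩ := hsurj ⟨u, hu'⟩
  have hveq' : Kop R peq p v = u := congrArg Subtype.val hveq
  refine ⟨v, ⟨hveq', LinearMap.mem_ker.mp hv⟩, ?_⟩
  rintro w ⟨hw1, hw2⟩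
  have hsub : Kop R peq p (w - v) = 0 := by
    have : F (w - v) = F w - F v := F.map_sub w v
    calc Kop R peq p (w - v) = F (w - v) := rfl
      _ = F w - F v := F.map_sub w v
      _ = u - u := by rw [show F w = u from hw1, show F v = u from hveq']
      _ = 0 := sub_self u
  have hsum0 : ∑ n, (w - v) n = 0 := by
    simp only [Pi.sub_apply, Finset.sum_sub_distrib, hw2, LinearMap.mem_ker.mp hv]
    simp [hw2]
    exact LinearMap.mem_ker.mp hv
  exact sub_eq_zero.mp (hker _ hsub hsum0)
end

section
/- Let N ≥ 1, let R be an N×N real matrix with R_{mn} ≥ 0 for all m ≠ n, let p^eq : Fin N → ℝ with p^eq_n > 0 satisfy detailed balance R_{nm}·p^eq_m = R_{mn}·p^eq_n, and let p : Fin N → ℝ with p_n > 0. Define (K_p v)_n := Σ_{m≠n} R_{nm} · p^eq_m · Φ(p_n/p^eq_n, p_m/p^eq_m) · (v_n − v_m). Then for every w ∈ ℝ^N with |w_n| ≤ 1 for all n, ⟨w, K_p w⟩ ≤ 2 · Σ_{n≠m} R_{mn} · p_n, where ⟨x,y⟩ = Σ_n x_n y_n and the right-hand sum is over all ordered pairs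 (n,m) with n ≠ m. -/
lemma log_ge_key (t : ℝ) (ht : 1 ≤ t) : 2 * (t - 1) / (t + 1) ≤ Real.log t := by
  have key : ∀ s : ℝ, 0 < s →
      HasDerivAt (fun u : ℝ => Real.log u - 2 + 4 / (u + 1))
        (1 / s - 4 / (s + 1) ^ 2) s := by
    intro s hs
    have h1 : HasDerivAt Real.log (1 / s) s := by
      simpa [one_div] using Real.hasDerivAt_log hs.ne'
    have h2 : HasDerivAt (fun u : ℝ => u + 1) 1 s := (hasDerivAt_id s).add_const 1
    have h3 : HasDerivAt (fun u : ℝ => 4 / (u + 1)) (4 * (-1 / (s + 1) ^ 2)) s := by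
      simpa [div_eq_mul_inv] using (h2.inv (by positivity)).const_mul 4
    have : HasDerivAt (fun u : ℝ => Real.log u - 2 + 4 / (u + 1))
        (1 / s + 4 * (-1 / (s + 1) ^ 2)) s := (h1.sub_const 2).add h3
    convert this using 1
    ring
  have hmono : MonotoneOn (fun u : ℝ => Real.log u - 2 + 4 / (u + 1)) (Set.Ici 1) := by
    apply monotoneOn_of_deriv_nonneg (convex_Ici 1)
    · apply ContinuousOn.add (ContinuousOn.sub ?_ continuousOn_const)
      · exact ContinuousOn.div continuousOn_const (by fun_prop)
          (fun x hx => by simp at hx; positivity)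
      · exact Real.continuousOn_log.mono (fun x hx => by simp at hx ⊢; linarith)
    · intro x hx
      rw [interior_Ici] at hx
      exact ((key x (by linarith [hx.out])).differentiableAt).differentiableWithinAt
    · intro x hx
      rw [interior_Ici] at hx
      have hx1 : (1:ℝ) < x := hx
      rw [(key x (by linarith)).deriv]
      rw [div_sub_div _ _ (by positivity) (by positivity : (x+1)^2 ≠ 0), le_div_iff₀ (by positivity)]
      nlinarith
  have h := hmono (Set.self_mem_Ici) (Set.mem_Ici.mpr ht) ht
  norm_num at h
  rw [div_le_iff₀ (by linarith : (0:ℝ) < t + 1)]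
  have h4 : 4 / (t + 1) * (t + 1) = 4 := by field_simp
  nlinarith [h, h4]

lemma logMean_nonneg {x y : ℝ} (hx : 0 < x) (hy : 0 < y) : 0 ≤ logMean x y := by
  unfold logMean
  split_ifs with h
  · exact hx.le
  · rcases lt_or_gt_of_ne h with hlt | hlt
    · exact (div_pos_of_neg_of_neg (by linarith) (by simpa using Real.log_lt_log hx hlt)).le
    · exact (div_pos (by linarith) (by simpa using Real.log_lt_log hy hlt)).le

lemma logMean_le_am {x y : ℝ} (hx : 0 < x) (hy : 0 < y) : logMean x y ≤ (x + y) / 2 := by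
  -- WLOG y < x
  wlog hxy : y ≤ x generalizing x y
  · rw [logMean_comm, add_comm]; exact this hy hx (le_of_not_ge hxy)
  rcases eq_or_lt_of_le hxy with rfl | hlt
  · simp [logMean]
  unfold logMean
  rw [if_neg hlt.ne']
  have hd : 0 < Real.log x - Real.log y := by simpa using Real.log_lt_log hy hlt
  rw [div_le_div_iff₀ hd (by norm_num)]
  have ht : 1 ≤ x / y := (one_le_div hy).mpr hxy
  have hkey := log_ge_key (x / y) ht
  have hlog : Real.log (x / y) = Real.log x - Real.log y := Real.log_div hx.ne' hy.ne'
  rw [hlog, div_le_iff₀ (by positivity : (0:ℝ) < x / y + 1)] at hkey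
  have e1 : x / y * y = x := div_mul_cancel₀ x hy.ne'
  nlinarith [hkey, hy, hd]

/-- For every `w` with `|w_n| ≤ 1`, `⟨w, K_p w⟩ ≤ 2 Σ_{n≠m} R_{mn} p_n` (the dynamical
activity bound). -/
theorem inner_Kop_le_two_mul_activity (N : ℕ) (hN : 1 ≤ N)
    (R : Matrix (Fin N) (Fin N) ℝ) (hR : ∀ m n : Fin N, m ≠ n → 0 ≤ R m n)
    (peq : Fin N → ℝ) (hpeq : ∀ n, 0 < peq n)
    (hdb : ∀ n m : Fin N, R n m * peq m = R m n * peq n)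
    (p : Fin N → ℝ) (hp : ∀ n, 0 < p n)
    (w : Fin N → ℝ) (hw : ∀ n, |w n| ≤ 1) :
    ∑ n, w n * Kop R peq p w n
      ≤ 2 * ∑ n, ∑ m ∈ Finset.univ.filter (· ≠ n), R m n * p n := by
  have step1 : ∑ n, w n * Kop R peq p w n
      ≤ ∑ n, ∑ m ∈ Finset.univ.filter (· ≠ n), (R m n * p n + R n m * p m) := by
    unfold Kop
    rw [show (∑ n, w n * ∑ m ∈ Finset.univ.filter (· ≠ n),
        R n m * peq m * logMean (p n / peq n) (p m / peq m) * (w n - w m))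
        = ∑ n, ∑ m ∈ Finset.univ.filter (· ≠ n),
        (R n m * peq m * logMean (p n / peq n) (p m / peq m)) * (w n * (w n - w m)) by
      simp only [Finset.mul_sum]; apply Finset.sum_congr rfl; intros
      apply Finset.sum_congr rfl; intros; ring]
    apply Finset.sum_le_sum
    intro n _
    apply Finset.sum_le_sum
    intro m hm
    rw [Finset.mem_filter] at hm
    have hmn : m ≠ n := hm.2
    set S := R n m * peq m * logMean (p n / peq n) (p m / peq m) with hSdef
    have hS0 : 0 ≤ S := by
      apply mul_nonneg (mul_nonneg (hR n m hmn.symm) (hpeq m).le)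
      exact logMean_nonneg (div_pos (hp n) (hpeq n)) (div_pos (hp m) (hpeq m))
    have hSle : S ≤ (R m n * p n + R n m * p m) / 2 := by
      have hΦ := logMean_le_am (div_pos (hp n) (hpeq n)) (div_pos (hp m) (hpeq m))
      have hRnm : 0 ≤ R n m * peq m := mul_nonneg (hR n m hmn.symm) (hpeq m).le
      have hPn : peq n ≠ 0 := (hpeq n).ne'
      have hPm : peq m ≠ 0 := (hpeq m).ne'
      have e1 : R n m * peq m * (p n / peq n) = R m n * p n := by
        rw [hdb n m]; field_simp
      have e2 : R n m * peq m * (p m / peq m) = R n m * p m := by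
        field_simp
      calc S ≤ R n m * peq m * ((p n / peq n + p m / peq m) / 2) := by
              exact mul_le_mul_of_nonneg_left hΦ hRnm
        _ = (R n m * peq m * (p n / peq n) + R n m * peq m * (p m / peq m)) / 2 := by ring
        _ = (R m n * p n + R n m * p m) / 2 := by rw [e1, e2]
    have hww : w n * (w n - w m) ≤ 2 := by
      have h1 := abs_le.mp (hw n)
      have h2 := abs_le.mp (hw m)
      nlinarith [h1.1, h1.2, h2.1, h2.2]
    nlinarith [hS0, hSle, hww]
  have hswap : ∑ n, ∑ m ∈ Finset.univ.filter (· ≠ n), R n m * p m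
      = ∑ n, ∑ m ∈ Finset.univ.filter (· ≠ n), R m n * p n := by
    calc ∑ n, ∑ m ∈ Finset.univ.filter (· ≠ n), R n m * p m
        = ∑ n : Fin N, ∑ m : Fin N, if m ≠ n then R n m * p m else 0 := by
          simp [Finset.sum_filter]
      _ = ∑ m : Fin N, ∑ n : Fin N, if m ≠ n then R n m * p m else 0 := Finset.sum_comm
      _ = ∑ n : Fin N, ∑ m : Fin N, if m ≠ n then R m n * p n else 0 := by
          apply Finset.sum_congr rfl; intro n _
          apply Finset.sum_congr rfl; intro m _
          simp [ne_comm]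
      _ = ∑ n, ∑ m ∈ Finset.univ.filter (· ≠ n), R m n * p n := by
          simp [Finset.sum_filter]
  calc ∑ n, w n * Kop R peq p w n
      ≤ ∑ n, ∑ m ∈ Finset.univ.filter (· ≠ n), (R m n * p n + R n m * p m) := step1
    _ = (∑ n, ∑ m ∈ Finset.univ.filter (· ≠ n), R m n * p n)
        + ∑ n, ∑ m ∈ Finset.univ.filter (· ≠ n), R n m * p m := by
          rw [← Finset.sum_add_distrib]
          apply Finset.sum_congr rfl; intros
          rw [← Finset.sum_add_distrib]
    _ = 2 * ∑ n, ∑ m ∈ Finset.univ.filter (· ≠ n), R m n * p n := by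
          rw [hswap]; ring
end
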